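/- arXiv:0809.0017 — 8 statements merged into one kernel-verified Lean document; each statement's English description precedes it below -/
import Mathlib

section
/- Let k be a field of characteristic 0 and suppose there exists a positive integer n such that the natural projection k*^ → k*/(k*)ⁿ is an isomorphism. Then the natural map (k*_tors)^ → k*^, induced by the inclusion of the torsion subgroup k*_tors ⊆ k*, is an isomorphism. -/
/-- The subgroup of `n`-th powers of a commutative group. -/
def powSubgroup (A : Type*) [CommGroup A] (n : ℕ) : Subgroup A :=
  MonoidHom.range (powMonoidHom n : A →* A)

/-- The transition map `A/Aᵐ → A/Aⁿ` of the projective system, for `n ∣ m`. -/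
def powTransition (A : Type*) [CommGroup A] {n m : ℕ} (h : n ∣ m) :
    A ⧸ powSubgroup A m →* A ⧸ powSubgroup A n :=
  QuotientGroup.map _ _ (MonoidHom.id A) (by
    rintro a ⟨b, rfl⟩
    obtain ⟨c, rfl⟩ := h
    refine Subgroup.mem_comap.2 ⟨b ^ c, ?_⟩
    simp only [powMonoidHom_apply, MonoidHom.id_apply, ← pow_mul, mul_comm])

/-- The pro-ℕ completion `Â = lim ← A/Aⁿ`, over positive integers ordered by
divisibility, realized as the subgroup of compatible families in the product. -/
def ProNCompletion (A : Type*) [CommGroup A] :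
    Subgroup (∀ n : ℕ+, A ⧸ powSubgroup A (n : ℕ)) where
  carrier := {x | ∀ (n m : ℕ+) (h : (n : ℕ) ∣ (m : ℕ)), powTransition A h (x m) = x n}
  one_mem' := by
    intro n m h
    simp
  mul_mem' := by
    intro x y hx hy n m h
    simp only [Pi.mul_apply, map_mul, hx n m h, hy n m h]
  inv_mem' := by
    intro x hx n m h
    simp only [Pi.inv_apply, map_inv, hx n m h]

lemma mem_proNCompletion {A : Type*} [CommGroup A]
    (x : ∀ n : ℕ+, A ⧸ powSubgroup A (n : ℕ)) :
    x ∈ ProNCompletion A ↔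
      ∀ (n m : ℕ+) (h : (n : ℕ) ∣ (m : ℕ)), powTransition A h (x m) = x n :=
  Iff.rfl

/-- The natural map `A → Â` to the pro-ℕ completion. -/
def toProN (A : Type*) [CommGroup A] : A →* ProNCompletion A where
  toFun a := ⟨fun _ => QuotientGroup.mk a, by
    intro n m h
    simp [powTransition]⟩
  map_one' := by
    apply Subtype.ext
    funext n
    simp
  map_mul' := by
    intro a b
    apply Subtype.ext
    funext n
    simp

/-- The natural projection `Â → A/Aⁿ`. -/
def proNProj (A : Type*) [CommGroup A] (n : ℕ+) :
    ProNCompletion A →* A ⧸ powSubgroup A (n : ℕ) :=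
  (Pi.evalMonoidHom (fun n : ℕ+ => A ⧸ powSubgroup A (n : ℕ)) n).comp
    (ProNCompletion A).subtype

/-- The map `A/Aⁿ → B/Bⁿ` induced by a homomorphism `f : A → B`. -/
def levelMap {A B : Type*} [CommGroup A] [CommGroup B] (f : A →* B) (n : ℕ) :
    A ⧸ powSubgroup A n →* B ⧸ powSubgroup B n :=
  QuotientGroup.map _ _ f (by
    rintro a ⟨b, rfl⟩
    exact Subgroup.mem_comap.2 ⟨f b, by simp [powMonoidHom_apply]⟩)

lemma powTransition_levelMap {A B : Type*} [CommGroup A] [CommGroup B] (f : A →* B)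
    {n m : ℕ} (h : n ∣ m) (z : A ⧸ powSubgroup A m) :
    powTransition B h (levelMap f m z) = levelMap f n (powTransition A h z) := by
  obtain ⟨a, rfl⟩ := QuotientGroup.mk_surjective z
  simp [powTransition, levelMap]

/-- Functoriality of the pro-ℕ completion: the map `Â → B̂` induced by `f : A → B`. -/
def ProNMap {A B : Type*} [CommGroup A] [CommGroup B] (f : A →* B) :
    ProNCompletion A →* ProNCompletion B where
  toFun x := ⟨fun n => levelMap f (n : ℕ) (x.1 n), by
    intro n m h
    rw [powTransition_levelMap, x.2 n m h]⟩
  map_one' := by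
    apply Subtype.ext
    funext n
    simp
  map_mul' := by
    intro a b
    apply Subtype.ext
    funext n
    simp

lemma isOfFinOrder_of_pow_aux {G : Type*} [CommGroup G] {a : G} {m : ℕ} (hm : 0 < m)
    (h : IsOfFinOrder (a ^ m)) : IsOfFinOrder a := by
  obtain ⟨r, hr, hr1⟩ := isOfFinOrder_iff_pow_eq_one.mp h
  exact isOfFinOrder_iff_pow_eq_one.mpr ⟨m * r, by positivity, by rw [pow_mul]; exact hr1⟩

lemma proNMap_bijective_of_level {A B : Type*} [CommGroup A] [CommGroup B] (f : A →* B)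
    (hlev : ∀ m : ℕ+, Function.Bijective (levelMap f (m : ℕ))) :
    Function.Bijective (ProNMap f) := by
  constructor
  · intro x y hxy
    apply Subtype.ext
    funext m
    exact (hlev m).injective (congrFun (congrArg Subtype.val hxy) m)
  · intro y
    have h1 : ∀ r : ℕ+,
        levelMap f (r : ℕ) ((Equiv.ofBijective _ (hlev r)).symm (y.1 r)) = y.1 r :=
      fun r => (Equiv.ofBijective _ (hlev r)).apply_symm_apply _
    refine ⟨⟨fun m => (Equiv.ofBijective _ (hlev m)).symm (y.1 m), ?_⟩, ?_⟩
    · intro p q hpq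
      apply (hlev p).injective
      rw [← powTransition_levelMap f hpq, h1 q, h1 p]
      exact y.2 p q hpq
    · apply Subtype.ext
      funext m
      exact h1 m

/-- If for some positive integer `n` the natural projection
`k*^ → k*/(k*)ⁿ` is an isomorphism, then the natural map `(k*_tors)^ → k*^`
induced by the inclusion of the torsion subgroup is an isomorphism. -/
theorem torsion_proN_bijective_of_proj_bijective
    (k : Type*) [Field k] [CharZero k]
    (h : ∃ n : ℕ+, Function.Bijective (proNProj kˣ n)) :
    Function.Bijective (ProNMap ((CommGroup.torsion kˣ).subtype)) := by
  obtain ⟨n, hn⟩ := h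
  have hpow : ∀ (m : ℕ+) (a : kˣ),
      a ∈ powSubgroup kˣ (n : ℕ) → a ∈ powSubgroup kˣ (m : ℕ) := by
    intro m a ha
    have h1 : toProN kˣ a = 1 := by
      apply hn.injective
      rw [map_one]
      show (QuotientGroup.mk a : kˣ ⧸ powSubgroup kˣ (n : ℕ)) = 1
      exact (QuotientGroup.eq_one_iff a).2 ha
    have h2 : (QuotientGroup.mk a : kˣ ⧸ powSubgroup kˣ (m : ℕ)) = 1 :=
      congrFun (congrArg Subtype.val h1) m
    exact (QuotientGroup.eq_one_iff a).1 h2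
  apply proNMap_bijective_of_level
  intro m
  constructor
  · intro x y hxy
    obtain ⟨t, rfl⟩ := QuotientGroup.mk_surjective x
    obtain ⟨s, rfl⟩ := QuotientGroup.mk_surjective y
    simp only [levelMap, QuotientGroup.map_mk] at hxy
    rw [QuotientGroup.eq] at hxy
    obtain ⟨c, hc⟩ := hxy
    rw [powMonoidHom_apply] at hc
    have hcf : IsOfFinOrder c := by
      apply isOfFinOrder_of_pow_aux m.pos
      rw [hc]
      have h2 : IsOfFinOrder (((t⁻¹ * s : CommGroup.torsion kˣ) : kˣ)) := (t⁻¹ * s).2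
      simpa using h2
    rw [QuotientGroup.eq]
    refine ⟨⟨c, hcf⟩, ?_⟩
    rw [powMonoidHom_apply]
    apply Subtype.ext
    simpa using hc
  · intro z
    obtain ⟨a, rfl⟩ := QuotientGroup.mk_surjective z
    have han : a ^ (n : ℕ) ∈ powSubgroup kˣ (n : ℕ) := ⟨a, rfl⟩
    obtain ⟨c, hc⟩ := hpow (m * n) _ han
    rw [powMonoidHom_apply, PNat.mul_coe] at hc
    have hcm : (c ^ (m : ℕ)) ^ (n : ℕ) = a ^ (n : ℕ) := by
      rw [← pow_mul]; exact hc
    set ζ := a * (c ^ (m : ℕ))⁻¹ with hζ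
    have hζn : ζ ^ (n : ℕ) = 1 := by
      rw [hζ, mul_pow, inv_pow, hcm, mul_inv_cancel]
    have hζtor : ζ ∈ CommGroup.torsion kˣ :=
      isOfFinOrder_iff_pow_eq_one.mpr ⟨n, n.pos, hζn⟩
    refine ⟨QuotientGroup.mk (⟨ζ, hζtor⟩ : CommGroup.torsion kˣ), ?_⟩
    simp only [levelMap, QuotientGroup.map_mk]
    rw [QuotientGroup.eq]
    refine ⟨c, ?_⟩
    rw [powMonoidHom_apply]
    show c ^ (m : ℕ) = _
    simp [hζ, mul_inv_rev, mul_assoc]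
end

section
/- Let k be a field of characteristic 0. The natural map (k*_tors)^ → k*^ induced by the inclusion of the torsion subgroup is an isomorphism if and only if for every positive integer n the natural map k*_tors/(k*_tors)ⁿ → k*/(k*)ⁿ is an isomorphism. -/
lemma levelMap_torsion_subtype_injective {G : Type*} [CommGroup G] {n : ℕ} (hn : 0 < n) :
    Function.Injective (levelMap ((CommGroup.torsion G).subtype) n) := by
  intro z w hzw
  obtain ⟨a, rfl⟩ := QuotientGroup.mk_surjective z
  obtain ⟨b, rfl⟩ := QuotientGroup.mk_surjective w
  have h : ((a : G)⁻¹ * b) ∈ powSubgroup G n := by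
    have := (QuotientGroup.eq (s := powSubgroup G n)).1 hzw
    simpa using this
  obtain ⟨x, hx⟩ := h
  simp only [powMonoidHom_apply] at hx
  have htors : IsOfFinOrder ((a : G)⁻¹ * b) := by
    have := (CommGroup.mem_torsion _).1 (a⁻¹ * b).2
    simpa using this
  obtain ⟨m, hm, hm1⟩ := htors.exists_pow_eq_one
  have hxfin : IsOfFinOrder x := by
    refine isOfFinOrder_iff_pow_eq_one.2 ⟨n * m, Nat.mul_pos hn hm, ?_⟩
    rw [pow_mul, hx, hm1]
  refine (QuotientGroup.eq (s := powSubgroup (CommGroup.torsion G) n)).2 ?_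
  exact ⟨⟨x, (CommGroup.mem_torsion x).2 hxfin⟩, by
    simp only [powMonoidHom_apply]
    exact Subtype.ext (by simpa using hx)⟩

/-- The natural map `(k*_tors)^ → k*^` on pro-ℕ completions is an
isomorphism if and only if for every positive integer `n` the natural map
`k*_tors/(k*_tors)ⁿ → k*/(k*)ⁿ` is an isomorphism. -/
theorem torsion_proN_bijective_iff_levelwise
    (k : Type*) [Field k] [CharZero k] :
    Function.Bijective (ProNMap ((CommGroup.torsion kˣ).subtype)) ↔
      ∀ n : ℕ, 0 < n →
        Function.Bijective (levelMap ((CommGroup.torsion kˣ).subtype) n) := by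
  constructor
  · intro hbij n hn
    refine ⟨levelMap_torsion_subtype_injective hn, ?_⟩
    intro y
    obtain ⟨b, rfl⟩ := QuotientGroup.mk_surjective y
    obtain ⟨z, hz⟩ := hbij.2 (toProN kˣ b)
    refine ⟨z.1 ⟨n, hn⟩, ?_⟩
    exact congrArg (fun w => w.1 ⟨n, hn⟩) hz
  · intro h
    constructor
    · intro z w hzw
      apply Subtype.ext
      funext n
      exact (h n n.2).1 (congrArg (fun x => x.1 n) hzw)
    · intro y
      choose g hg using fun (n : ℕ+) => (h n n.2).2 (y.1 n)
      refine ⟨⟨fun n => g n, ?_⟩, Subtype.ext (funext fun n => hg n)⟩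
      intro n m hdvd
      apply (h n n.2).1
      rw [← powTransition_levelMap, hg m, hg n, y.2 n m hdvd]
end

section
/- Let k be a field of characteristic 0. The following are equivalent: (a) the pro-ℕ completion k*^ is finite, cyclic, and generated by the image of a root of unity of k; (b) k*^ is finite; (c) k*^ is countable. In particular, k*^ is either finite or uncountable. -/
section Aux
variable {A : Type*} [CommGroup A]

lemma powTransition_mk {n m : ℕ} (h : n ∣ m) (a : A) :
    powTransition A h (QuotientGroup.mk a) = QuotientGroup.mk a := rfl

lemma proNProj_apply (N : ℕ+) (x : ProNCompletion A) : proNProj A N x = x.1 N := rfl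

lemma toProN_apply (a : A) (q : ℕ+) : (toProN A a).1 q = QuotientGroup.mk a := rfl

lemma comp_vanish (x : ProNCompletion A) {q r : ℕ+} (h : (q:ℕ) ∣ (r:ℕ)) (hr : x.1 r = 1) :
    x.1 q = 1 := by rw [← x.2 q r h, hr, map_one]

lemma comp_ne_one (x : ProNCompletion A) {q r : ℕ+} (h : (q:ℕ) ∣ (r:ℕ)) (hq : x.1 q ≠ 1) :
    x.1 r ≠ 1 := fun hr => hq (comp_vanish x h hr)

lemma eq_one_of_forall_comp (x : ProNCompletion A) (h : ∀ q : ℕ+, x.1 q = 1) : x = 1 :=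
  Subtype.ext (funext h)

lemma pow_comp (x : ProNCompletion A) (m : ℕ) (q : ℕ+) : (x ^ m).1 q = (x.1 q) ^ m := rfl

lemma mul_inv_comp (x y : ProNCompletion A) (q : ℕ+) :
    (x * y⁻¹).1 q = x.1 q * (y.1 q)⁻¹ := rfl

end Aux
lemma exists_faithful_level (A : Type*) [CommGroup A] (hc : Countable (ProNCompletion A)) :
    ∃ N : ℕ+, ∀ x : ProNCompletion A, x.1 N = 1 → x = 1 := by
  by_contra hcon
  push_neg at hcon
  choose Y hY1 hY2 using hcon
  have h3 : ∀ N : ℕ+, ∃ q : ℕ+, (Y N).1 q ≠ 1 := by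
    intro N
    by_contra hq
    push_neg at hq
    exact hY2 N (eq_one_of_forall_comp _ hq)
  choose L hL using h3
  set n : ℕ → ℕ+ := fun j => Nat.rec 1 (fun j nj => nj * (L nj * ⟨j+1, j.succ_pos⟩)) j with hn
  have hsucc : ∀ j, n (j+1) = n j * (L (n j) * ⟨j+1, j.succ_pos⟩) := fun j => rfl
  set M : ℕ → ℕ+ := fun j => L (n j) * ⟨j+1, j.succ_pos⟩ with hM
  have hstep : ∀ j, (n j : ℕ) ∣ (n (j+1) : ℕ) := by
    intro j
    rw [hsucc j]
    push_cast
    exact dvd_mul_right _ _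
  have hchain : ∀ i j, i ≤ j → (n i : ℕ) ∣ (n j : ℕ) := by
    intro i j hij
    induction hij with
    | refl => exact dvd_rfl
    | step h ih => exact ih.trans (hstep _)
  have hMdvd : ∀ j, (M j : ℕ) ∣ (n (j+1) : ℕ) := by
    intro j
    rw [hsucc j]
    push_cast
    exact dvd_mul_left _ _
  have hle : ∀ (q : ℕ+) (i : ℕ), (q:ℕ) ≤ i → (q:ℕ) ∣ (n i : ℕ) := by
    intro q i hqi
    obtain ⟨t, ht⟩ : ∃ t, (q:ℕ) = t + 1 := ⟨(q:ℕ) - 1, (Nat.succ_pred_eq_of_pos q.2).symm⟩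
    have h1 : (q:ℕ) ∣ (n (t+1) : ℕ) := by
      rw [hsucc t]
      push_cast
      rw [ht]
      exact Dvd.dvd.mul_left (dvd_mul_left _ _) _
    exact h1.trans (hchain (t+1) i (ht ▸ hqi))
  have hvanish : ∀ (i : ℕ) (q : ℕ+), (q:ℕ) ∣ (n i : ℕ) → (Y (n i)).1 q = 1 :=
    fun i q h => comp_vanish _ h (hY1 (n i))
  have hvanish' : ∀ {i j : ℕ}, j < i → (Y (n i)).1 (M j) = 1 :=
    fun {i j} h => hvanish i (M j) ((hMdvd j).trans (hchain (j+1) i h))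
  have hYM : ∀ j, (Y (n j)).1 (M j) ≠ 1 := by
    intro j
    refine comp_ne_one _ ?_ (hL (n j))
    rw [hM]
    push_cast
    exact dvd_mul_right _ _
  have hjM : ∀ j, j < (M j : ℕ) := by
    intro j
    have : (M j : ℕ) = (L (n j) : ℕ) * (j + 1) := rfl
    rw [this]
    calc j < j + 1 := j.lt_succ_self
    _ ≤ (L (n j) : ℕ) * (j+1) := Nat.le_mul_of_pos_left _ (L (n j)).2
  -- the injection from ℕ → Bool
  set z : (ℕ → Bool) → ProNCompletion A := fun ε =>
    ⟨fun q => ∏ i ∈ Finset.range (q:ℕ), (if ε i = true then (Y (n i)).1 q else 1), by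
      intro q r hqr
      rw [map_prod]
      have e1 : ∀ i ∈ Finset.range (r:ℕ),
          powTransition A hqr (if ε i = true then (Y (n i)).1 r else 1)
            = (if ε i = true then (Y (n i)).1 q else 1) := by
        intro i _
        split
        · exact (Y (n i)).2 q r hqr
        · exact map_one _
      rw [Finset.prod_congr rfl e1]
      refine (Finset.prod_subset (Finset.range_subset_range.2 (Nat.le_of_dvd r.2 hqr)) ?_).symm
      intro i _ hiq
      have hqi : (q:ℕ) ≤ i := Nat.le_of_not_lt (by simpa using hiq)
      rw [hvanish i q (hle q i hqi)]
      simp⟩ with hz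
  have hinj : Function.Injective z := by
    intro ε ε' hzz
    by_contra hne
    have hex : ∃ j, ε j ≠ ε' j := by
      by_contra h
      push_neg at h
      exact hne (funext h)
    set j := Nat.find hex with hjdef
    have hj : ε j ≠ ε' j := Nat.find_spec hex
    have hmin : ∀ i, i < j → ε i = ε' i := fun i hi => not_not.mp (Nat.find_min hex hi)
    have hcomp : (z ε).1 (M j) = (z ε').1 (M j) := by rw [hzz]
    have hjmem : j ∈ Finset.range ((M j : ℕ)) := Finset.mem_range.2 (hjM j)
    rw [hz] at hcomp
    simp only at hcomp
    rw [← Finset.mul_prod_erase _ _ hjmem, ← Finset.mul_prod_erase _ _ hjmem] at hcomp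
    have heq : ∏ i ∈ (Finset.range ((M j : ℕ))).erase j,
          (if ε i = true then (Y (n i)).1 (M j) else 1)
        = ∏ i ∈ (Finset.range ((M j : ℕ))).erase j,
          (if ε' i = true then (Y (n i)).1 (M j) else 1) := by
      refine Finset.prod_congr rfl ?_
      intro i hi
      have hij : i ≠ j := Finset.ne_of_mem_erase hi
      rcases lt_or_gt_of_ne hij with h | h
      · rw [hmin i h]
      · rw [hvanish' h]
        simp
    rw [heq] at hcomp
    have hcancel := mul_right_cancel hcomp
    cases hε : ε j <;> cases hε' : ε' j
    · exact hj (hε.trans hε'.symm)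
    · rw [hε, hε'] at hcancel
      simp only [if_true, if_false] at hcancel
      exact hYM j hcancel.symm
    · rw [hε, hε'] at hcancel
      simp only [if_true, if_false] at hcancel
      exact hYM j hcancel
    · exact hj (hε.trans hε'.symm)
  have hcount : Countable (ℕ → Bool) := hinj.countable
  obtain ⟨g, hg⟩ := (countable_iff_exists_injective _).mp hcount
  classical
  refine Function.cantor_injective (fun s : Set ℕ => g fun m => decide (m ∈ s)) ?_
  intro s t h
  have h2 := hg h
  ext m
  have := congrFun h2 m
  simpa [decide_eq_decide] using this
lemma proN_structure (k : Type*) [Field k] (hc : Countable (ProNCompletion kˣ)) :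
    Finite (ProNCompletion kˣ) ∧ ∃ ζ : kˣ, IsOfFinOrder ζ ∧
      ∀ x : ProNCompletion kˣ, x ∈ Subgroup.zpowers (toProN kˣ ζ) := by
  obtain ⟨N, hN⟩ := exists_faithful_level kˣ hc
  have hpow : ∀ x : ProNCompletion kˣ, x ^ (N:ℕ) = 1 := by
    intro x
    apply hN
    rw [pow_comp]
    obtain ⟨a, ha⟩ := QuotientGroup.mk_surjective (x.1 N)
    rw [← ha, ← QuotientGroup.mk_pow]
    exact (QuotientGroup.eq_one_iff _).2 ⟨a, rfl⟩
  have hrep : ∀ x : ProNCompletion kˣ, ∃ ζ : kˣ, ζ ^ (N:ℕ) = 1 ∧ x = toProN kˣ ζ := by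
    intro x
    obtain ⟨a, ha⟩ := QuotientGroup.mk_surjective (x.1 (N*N))
    have h1 : (QuotientGroup.mk (a ^ (N:ℕ)) : kˣ ⧸ powSubgroup kˣ ((N*N : ℕ+):ℕ)) = 1 := by
      rw [QuotientGroup.mk_pow, ha, ← pow_comp, hpow x]
      rfl
    obtain ⟨b, hb⟩ := (QuotientGroup.eq_one_iff _).1 h1
    have hb' : b ^ ((N:ℕ) * (N:ℕ)) = a ^ (N:ℕ) := by
      have : ((N*N : ℕ+) : ℕ) = (N:ℕ) * (N:ℕ) := by push_cast; ring
      rw [← this]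
      exact hb
    refine ⟨a * (b ^ (N:ℕ))⁻¹, ?_, ?_⟩
    · rw [mul_pow, inv_pow, ← pow_mul, hb']
      exact mul_inv_cancel _
    · have hdvd : (N:ℕ) ∣ ((N*N : ℕ+):ℕ) := by push_cast; exact dvd_mul_right _ _
      have hxN : x.1 N = QuotientGroup.mk a := by
        rw [← x.2 N (N*N) hdvd, ← ha, powTransition_mk]
      have hbN : (QuotientGroup.mk (b ^ (N:ℕ)) : kˣ ⧸ powSubgroup kˣ (N:ℕ)) = 1 :=
        (QuotientGroup.eq_one_iff _).2 ⟨b, rfl⟩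
      have key : (x * (toProN kˣ (a * (b ^ (N:ℕ))⁻¹))⁻¹) = 1 := by
        apply hN
        rw [mul_inv_comp, toProN_apply, hxN]
        rw [show (QuotientGroup.mk (a * (b ^ (N:ℕ))⁻¹) : kˣ ⧸ powSubgroup kˣ (N:ℕ))
            = QuotientGroup.mk a * (QuotientGroup.mk (b ^ (N:ℕ)))⁻¹ from rfl, hbN]
        group
      have := mul_inv_eq_one.1 key
      exact this.symm ▸ rfl
  haveI : NeZero (N:ℕ) := ⟨N.pos.ne'⟩
  have hsurj : Function.Surjective
      (fun ζ : rootsOfUnity (N:ℕ) k => toProN kˣ (ζ : kˣ)) := by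
    intro x
    obtain ⟨ζ, hζ, hx⟩ := hrep x
    exact ⟨⟨ζ, (mem_rootsOfUnity _ _).2 hζ⟩, hx.symm⟩
  constructor
  · exact Finite.of_surjective _ hsurj
  · obtain ⟨g, hg⟩ := IsCyclic.exists_generator (α := rootsOfUnity (N:ℕ) k)
    refine ⟨(g : kˣ), ?_, ?_⟩
    · exact isOfFinOrder_iff_pow_eq_one.2 ⟨(N:ℕ), N.pos, (mem_rootsOfUnity _ _).1 g.2⟩
    · intro x
      obtain ⟨ζ, hζ, hx⟩ := hrep x
      obtain ⟨i, hi⟩ := hg ⟨ζ, (mem_rootsOfUnity _ _).2 hζ⟩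
      have hζ' : (g : kˣ) ^ i = ζ := by
        have := congrArg (fun y : rootsOfUnity (N:ℕ) k => (y : kˣ)) hi
        simpa using this
      refine ⟨i, ?_⟩
      show (toProN kˣ (g : kˣ)) ^ i = x
      rw [← map_zpow, hζ']
      exact hx.symm
/-- For a field `k` of characteristic zero the following are
equivalent: (a) `k*^` is finite, cyclic and generated by the image of a root of
unity of `k`; (b) `k*^` is finite; (c) `k*^` is countable.  In particular
`k*^` is either finite or uncountable. -/
theorem proN_finite_cyclic_tfae
    (k : Type*) [Field k] [CharZero k] :
    ((Finite (ProNCompletion kˣ) ∧ ∃ ζ : kˣ, IsOfFinOrder ζ ∧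
        ∀ x : ProNCompletion kˣ, x ∈ Subgroup.zpowers (toProN kˣ ζ)) ↔
      Finite (ProNCompletion kˣ)) ∧
    (Finite (ProNCompletion kˣ) ↔ Countable (ProNCompletion kˣ)) ∧
    (Finite (ProNCompletion kˣ) ∨ ¬ Countable (ProNCompletion kˣ)) := by
  have main := fun hc => proN_structure k hc
  refine ⟨⟨fun h => h.1, fun h => ⟨h, (main (@Finite.to_countable _ h)).2⟩⟩,
    ⟨fun h => @Finite.to_countable _ h, fun h => (main h).1⟩, ?_⟩
  by_cases hc : Countable (ProNCompletion kˣ)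
  · exact Or.inl (main hc).1
  · exact Or.inr hc
end

section
/- Let A be an abelian group, written multiplicatively, whose pro-ℕ completion Â = lim←_n A/Aⁿ is countable. Then the projective system stabilizes at a finite level: there exists a positive integer n such that the natural projection Â → A/Aⁿ is an isomorphism. -/
/-- Auxiliary recursively-defined chain of levels. -/
def proNChainAux (f : ℕ+ → ℕ+) : ℕ → ℕ+
  | 0 => 1
  | k + 1 => proNChainAux f k * f (proNChainAux f k) * k.succPNat

lemma powTransition_comp {A : Type*} [CommGroup A] {n m k : ℕ} (h1 : n ∣ m) (h2 : m ∣ k)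
    (z : A ⧸ powSubgroup A k) :
    powTransition A h1 (powTransition A h2 z) = powTransition A (h1.trans h2) z := by
  obtain ⟨a, rfl⟩ := QuotientGroup.mk_surjective z
  rfl

lemma coord_eq_one_of_dvd {A : Type*} [CommGroup A] (x : ProNCompletion A) {n m : ℕ+}
    (h : (n : ℕ) ∣ (m : ℕ)) (hm : x.1 m = 1) : x.1 n = 1 := by
  rw [← x.2 n m h, hm, map_one]

/-- If the pro-ℕ completion `Â` of an abelian group `A` is
countable, then the projective system stabilizes at a finite level: for some
positive integer `n` the natural projection `Â → A/Aⁿ` is an isomorphism. -/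
theorem proN_stabilizes_of_countable
    (A : Type*) [CommGroup A] (h : Countable (ProNCompletion A)) :
    ∃ n : ℕ+, Function.Bijective (proNProj A n) := by
  classical
  have hproj : ∀ (n : ℕ+) (x : ProNCompletion A), proNProj A n x = x.1 n := fun _ _ => rfl
  have hsurj : ∀ n : ℕ+, Function.Surjective (proNProj A n) := by
    intro n z
    obtain ⟨a, rfl⟩ := QuotientGroup.mk_surjective z
    exact ⟨toProN A a, rfl⟩
  by_contra hc
  push_neg at hc
  -- every level has a nontrivial kernel element
  have hker : ∀ n : ℕ+, ∃ x : ProNCompletion A, x ≠ 1 ∧ x.1 n = 1 := by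
    intro n
    have hni : ¬ Function.Injective (proNProj A n) := fun hi => hc n ⟨hi, hsurj n⟩
    simp only [Function.Injective, not_forall] at hni
    obtain ⟨a, b, hab, hne⟩ := hni
    refine ⟨a * b⁻¹, fun hh => hne ?_, ?_⟩
    · have := congrArg (· * b) hh
      simpa [mul_assoc] using this
    · have : proNProj A n (a * b⁻¹) = 1 := by
        rw [map_mul, map_inv, hab, mul_inv_cancel]
      simpa [hproj] using this
  choose g hg1 hg2 using hker
  -- choose a coordinate witnessing nontriviality
  have hMex : ∀ x : ProNCompletion A, x ≠ 1 → ∃ m : ℕ+, x.1 m ≠ 1 := by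
    intro x hx
    by_contra hcon
    push_neg at hcon
    exact hx (Subtype.ext (funext hcon))
  let M : ProNCompletion A → ℕ+ := fun x =>
    if hx : x = 1 then 1 else Classical.choose (hMex x hx)
  have hM1 : ∀ (x : ProNCompletion A) (hx : x ≠ 1), x.1 (M x) ≠ 1 := by
    intro x hx
    show (x.1 (if hx : x = 1 then 1 else Classical.choose (hMex x hx)) ≠ 1)
    rw [dif_neg hx]
    exact Classical.choose_spec (hMex x hx)
  -- recursive construction of levels
  let N : ℕ → ℕ+ := proNChainAux (fun nk => M (g nk))
  set x : ℕ → ProNCompletion A := fun k => g (N k) with hxdef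
  set m : ℕ → ℕ+ := fun k => M (x k) with hmdef
  have hNsucc : ∀ k, N (k + 1) = N k * m k * k.succPNat := fun k => rfl
  have hNd : ∀ k, (N k : ℕ) ∣ (N (k + 1) : ℕ) := by
    intro k
    rw [hNsucc]
    exact ⟨(m k : ℕ) * k.succPNat, by push_cast; ring⟩
  have hNmono : ∀ j k, j ≤ k → (N j : ℕ) ∣ (N k : ℕ) := by
    intro j k hjk
    induction k with
    | zero => simp [Nat.le_zero.mp hjk]
    | succ k ih =>
      rcases Nat.lt_or_ge j (k + 1) with hlt | hge
      · exact (ih (Nat.lt_succ_iff.mp hlt)).trans (hNd k)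
      · have : j = k + 1 := le_antisymm hjk hge
        simp [this]
  have hmd : ∀ k, (m k : ℕ) ∣ (N (k + 1) : ℕ) := by
    intro k
    rw [hNsucc]
    exact ⟨(N k : ℕ) * k.succPNat, by push_cast; ring⟩
  have hself : ∀ d : ℕ+, (d : ℕ) ∣ (N (d : ℕ) : ℕ) := by
    intro d
    obtain ⟨j, hj⟩ : ∃ j, (d : ℕ) = j + 1 := ⟨(d : ℕ) - 1, (Nat.succ_pred_eq_of_pos d.2).symm⟩
    rw [hj, hNsucc]
    refine ⟨(N j : ℕ) * (m j : ℕ), ?_⟩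
    push_cast [Nat.succPNat_coe, Nat.succ_eq_add_one]
    ring
  have hx1 : ∀ k, x k ≠ 1 := fun k => hg1 (N k)
  have hxN : ∀ k, (x k).1 (N k) = 1 := fun k => hg2 (N k)
  have hxm : ∀ k, (x k).1 (m k) ≠ 1 := fun k => hM1 _ (hx1 k)
  have hvanish : ∀ (k : ℕ) (d : ℕ+), (d : ℕ) ∣ (N k : ℕ) → (x k).1 d = 1 :=
    fun k d hd => coord_eq_one_of_dvd (x k) hd (hxN k)
  have hbig : ∀ (k : ℕ) (d : ℕ+), (d : ℕ) ≤ k → (x k).1 d = 1 := by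
    intro k d hd
    exact hvanish k d ((hself d).trans (hNmono _ _ hd))
  -- the compatible families indexed by subsets of ℕ
  let Y : Set ℕ → ∀ d : ℕ+, A ⧸ powSubgroup A (d : ℕ) := fun S d =>
    ∏ j ∈ Finset.range (d : ℕ), if j ∈ S then (x j).1 d else 1
  have hYmem : ∀ S, Y S ∈ ProNCompletion A := by
    intro S n' m' hnm
    show powTransition A hnm (Y S m') = Y S n'
    have h1 : powTransition A hnm (Y S m') =
        ∏ j ∈ Finset.range (m' : ℕ), if j ∈ S then (x j).1 n' else 1 := by
      rw [map_prod]
      refine Finset.prod_congr rfl fun j _ => ?_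
      rw [apply_ite (powTransition A hnm), map_one, (x j).2 n' m' hnm]
    rw [h1]
    refine (Finset.prod_subset (Finset.range_subset_range.2 (Nat.le_of_dvd m'.2 hnm)) ?_).symm
    intro j _ hj
    have hj' : (n' : ℕ) ≤ j := by simpa using hj
    simp [hbig j n' hj']
  let Φ : Set ℕ → ProNCompletion A := fun S => ⟨Y S, hYmem S⟩
  have hΦ : Function.Injective Φ := by
    intro S T hST
    by_contra hne
    have hex : ∃ j, ¬(j ∈ S ↔ j ∈ T) := by
      by_contra hc2
      push_neg at hc2
      exact hne (Set.ext fun j => hc2 j)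
    set k := Nat.find hex with hkdef
    have hk : ¬(k ∈ S ↔ k ∈ T) := Nat.find_spec hex
    have hmin : ∀ j < k, (j ∈ S ↔ j ∈ T) := fun j hj => not_not.1 (Nat.find_min hex hj)
    have hklt : k < (m k : ℕ) := by
      by_contra hcon
      push_neg at hcon
      exact hxm k (hbig k (m k) hcon)
    have hYeq : Y S (m k) = Y T (m k) := congrFun (congrArg Subtype.val hST) (m k)
    have htail : ∀ (U : Set ℕ), Y U (m k) =
        (∏ j ∈ Finset.range k, if j ∈ U then (x j).1 (m k) else 1) *
          (if k ∈ U then (x k).1 (m k) else 1) := by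
      intro U
      have hsub : Finset.range (k + 1) ⊆ Finset.range ((m k : ℕ)) :=
        Finset.range_subset_range.2 hklt
      have h2 : Y U (m k) = ∏ j ∈ Finset.range (k + 1),
          if j ∈ U then (x j).1 (m k) else 1 := by
        refine (Finset.prod_subset hsub ?_).symm
        intro j _ hj
        have hj' : k + 1 ≤ j := by simpa using hj
        have : (x j).1 (m k) = 1 :=
          hvanish j (m k) ((hmd k).trans (hNmono (k + 1) j hj'))
        simp [this]
      rw [h2, Finset.prod_range_succ]
    have hhead : (∏ j ∈ Finset.range k, if j ∈ S then (x j).1 (m k) else 1) =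
        ∏ j ∈ Finset.range k, if j ∈ T then (x j).1 (m k) else 1 := by
      refine Finset.prod_congr rfl fun j hj => ?_
      rw [hmin j (Finset.mem_range.1 hj)]
    have hfin : (if k ∈ S then (x k).1 (m k) else 1) =
        (if k ∈ T then (x k).1 (m k) else 1) := by
      have := hYeq
      rw [htail S, htail T, hhead] at this
      exact mul_left_cancel this
    by_cases hkS : k ∈ S
    · have hkT : k ∉ T := fun hkT => hk ⟨fun _ => hkT, fun _ => hkS⟩
      rw [if_pos hkS, if_neg hkT] at hfin
      exact hxm k hfin
    · have hkT : k ∈ T := by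
        by_contra hkT
        exact hk ⟨fun h' => absurd h' hkS, fun h' => absurd h' hkT⟩
      rw [if_neg hkS, if_pos hkT] at hfin
      exact hxm k hfin.symm
  have : Countable (Set ℕ) := hΦ.countable
  obtain ⟨f, hf⟩ := Countable.exists_injective_nat (Set ℕ)
  obtain ⟨e, he⟩ := Countable.exists_injective_nat ℕ
  exact Function.cantor_injective f hf
end

section
/- Let k be a field of characteristic 0 with a fixed algebraic closure k̄. Suppose there exist an element a ∈ k*, a positive integer n, and a root α ∈ k̄ of Xⁿ − a such that the extension k(α)/k is not an abelian field extension (i.e., it is not both Galois and with commutative Galois group). Then the pro-ℕ completion k*^ is uncountable; in particular k has nontrivial Kummer theory. -/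
lemma zpow_mem_powSubgroup {A : Type*} [CommGroup A] (b : A) {N : ℕ} {z : ℤ}
    (h : (N : ℤ) ∣ z) : b ^ z ∈ powSubgroup A N := by
  obtain ⟨t, rfl⟩ := h
  refine ⟨b ^ t, ?_⟩
  rw [powMonoidHom_apply, ← zpow_natCast ((b ^ t)) N, ← zpow_mul, mul_comm]

lemma zpow_mem_powSubgroup_congr {A : Type*} [CommGroup A] (b : A) {N : ℕ} {z w : ℤ}
    (h : (N : ℤ) ∣ z - w) :
    b ^ z ∈ powSubgroup A N ↔ b ^ w ∈ powSubgroup A N := by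
  constructor <;> intro hm
  · have := (powSubgroup A N).mul_mem ((powSubgroup A N).inv_mem (zpow_mem_powSubgroup b h)) hm
    rwa [← zpow_neg, ← zpow_add, neg_sub, sub_add_cancel] at this
  · have := (powSubgroup A N).mul_mem (zpow_mem_powSubgroup b h) hm
    rwa [← zpow_add, sub_add_cancel] at this

lemma not_countable_funBool : ¬ Countable (ℕ → Bool) := by
  intro h
  have : Countable (Set ℕ) :=
    Countable.of_equiv _ (Equiv.arrowCongr (Equiv.refl ℕ) (Equiv.propEquivBool)).symm
  obtain ⟨f, hf⟩ := (countable_iff_exists_injective (Set ℕ)).1 this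
  exact Function.cantor_injective f hf

lemma uncountable_of_good {A : Type*} [CommGroup A] {p : ℕ} (hp : p.Prime) (b : A)
    (hb : ∀ m : ℕ, b ^ p ^ m ∉ powSubgroup A (p ^ (m + 1))) :
    ¬ Countable (ProNCompletion A) := by
  intro hcount
  classical
  set x : (ℕ → Bool) → ℕ → ℕ := fun s m => ∑ i ∈ Finset.range m, (if s i then p ^ i else 0)
    with hxdef
  have hxc : ∀ (s : ℕ → Bool) {m m' : ℕ}, m ≤ m' → x s m' ≡ x s m [MOD p ^ m] := by
    intro s m m' h
    induction m' , h using Nat.le_induction with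
    | base => rfl
    | succ m' hm' ih =>
      have hstep : x s (m' + 1) = x s m' + (if s m' then p ^ m' else 0) := by
        simp [hxdef, Finset.sum_range_succ]
      rw [hstep]
      have hd : p ^ m ∣ (if s m' then p ^ m' else 0) := by
        split_ifs
        · exact pow_dvd_pow p hm'
        · exact dvd_zero _
      calc x s m' + (if s m' then p ^ m' else 0) ≡ x s m' + 0 [MOD p ^ m] :=
            Nat.ModEq.add_left _ ((Nat.modEq_zero_iff_dvd).2 hd)
        _ = x s m' := by ring
        _ ≡ x s m [MOD p ^ m] := ih
  have hco : ∀ n : ℕ+,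
      Nat.Coprime (p ^ (n : ℕ).factorization p) ((n : ℕ) / p ^ (n : ℕ).factorization p) :=
    fun n => Nat.Coprime.pow_left _ (Nat.coprime_ordCompl hp n.ne_zero)
  set c : (ℕ → Bool) → ℕ+ → ℕ := fun s n =>
    (Nat.chineseRemainder (hco n) (x s ((n : ℕ).factorization p)) 0 : ℕ) with hcdef
  have hc1 : ∀ (s : ℕ → Bool) (n : ℕ+),
      c s n ≡ x s ((n : ℕ).factorization p) [MOD p ^ (n : ℕ).factorization p] :=
    fun s n => (Nat.chineseRemainder (hco n) _ 0).2.1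
  have hc2 : ∀ (s : ℕ → Bool) (n : ℕ+),
      c s n ≡ 0 [MOD ((n : ℕ) / p ^ (n : ℕ).factorization p)] :=
    fun s n => (Nat.chineseRemainder (hco n) _ 0).2.2
  have hkey : ∀ (s : ℕ → Bool) (n m : ℕ+), (n : ℕ) ∣ (m : ℕ) →
      c s m ≡ c s n [MOD (n : ℕ)] := by
    intro s n m h
    have hvm : (n : ℕ).factorization p ≤ (m : ℕ).factorization p :=
      (Nat.factorization_le_iff_dvd n.ne_zero m.ne_zero).2 h p
    have h1 : c s m ≡ c s n [MOD p ^ (n : ℕ).factorization p] := by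
      refine (((hc1 s m).of_dvd (pow_dvd_pow p hvm)).trans ?_).trans ((hc1 s n).symm)
      exact hxc s hvm
    have h2 : c s m ≡ c s n [MOD ((n : ℕ) / p ^ (n : ℕ).factorization p)] :=
      ((hc2 s m).of_dvd (Nat.ordCompl_dvd_ordCompl_of_dvd h p)).trans (hc2 s n).symm
    have := (Nat.modEq_and_modEq_iff_modEq_mul (hco n)).1 ⟨h1, h2⟩
    rwa [Nat.ordProj_mul_ordCompl_eq_self] at this
  set φ : (ℕ → Bool) → ProNCompletion A := fun s =>
    ⟨fun n => QuotientGroup.mk (b ^ ((c s n : ℤ))), by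
      intro n m h
      show powTransition A h (QuotientGroup.mk _) = QuotientGroup.mk _
      rw [powTransition, QuotientGroup.map_mk]
      rw [QuotientGroup.eq]
      have heq : (b ^ ((c s m : ℤ)))⁻¹ * b ^ ((c s n : ℤ)) =
          b ^ ((c s n : ℤ) - (c s m : ℤ)) := by
        rw [zpow_sub]; group
      rw [MonoidHom.id_apply, heq]
      exact zpow_mem_powSubgroup b ((hkey s n m h).dvd)⟩ with hφdef
  have hinj : Function.Injective φ := by
    intro s t hst
    have heq : ∀ n : ℕ+,
        (QuotientGroup.mk (b ^ ((c s n : ℤ))) : A ⧸ powSubgroup A (n : ℕ)) =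
          QuotientGroup.mk (b ^ ((c t n : ℤ))) := by
      intro n
      exact congrFun (congrArg Subtype.val hst) n
    funext i
    induction i using Nat.strong_induction_on with
    | _ i IH =>
      by_contra hne
      set n : ℕ+ := ⟨p ^ (i + 1), pow_pos hp.pos _⟩ with hndef
      have hv : ((n : ℕ)).factorization p = i + 1 := by
        show ((p ^ (i+1) : ℕ)).factorization p = i + 1
        rw [hp.factorization_pow, Finsupp.single_eq_same]
      have hmem : b ^ ((c t n : ℤ) - (c s n : ℤ)) ∈ powSubgroup A (p ^ (i + 1)) := by
        have h0 := (QuotientGroup.eq).1 (heq n)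
        have heq2 : (b ^ ((c s n : ℤ)))⁻¹ * b ^ ((c t n : ℤ)) =
            b ^ ((c t n : ℤ) - (c s n : ℤ)) := by
          rw [zpow_sub]; group
        rw [heq2] at h0
        exact h0
      have hcast : ∀ u : ℕ → Bool,
          (((p : ℤ)) ^ (i + 1)) ∣ ((c u n : ℤ) - (x u (i + 1) : ℤ)) := by
        intro u
        have h1 := (hc1 u n).dvd
        rw [hv] at h1
        push_cast at h1
        have h2 := dvd_neg.2 h1
        rwa [neg_sub] at h2
      have hmem2 : b ^ ((x t (i+1) : ℤ) - (x s (i+1) : ℤ)) ∈ powSubgroup A (p ^ (i + 1)) := by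
        rw [← zpow_mem_powSubgroup_congr (N := p ^ (i+1)) b
          (z := (c t n : ℤ) - (c s n : ℤ)) (w := (x t (i+1) : ℤ) - (x s (i+1) : ℤ)) ?_]
        · exact hmem
        · have h3 : (c t n : ℤ) - (c s n : ℤ) - (((x t (i+1) : ℤ)) - ((x s (i+1) : ℤ))) =
              ((c t n : ℤ) - (x t (i+1) : ℤ)) - ((c s n : ℤ) - (x s (i+1) : ℤ)) := by ring
          rw [h3]
          push_cast
          exact dvd_sub (hcast t) (hcast s)
      have hxi : x s i = x t i := by
        simp only [hxdef]
        exact Finset.sum_congr rfl fun j hj => by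
          rw [IH j (Finset.mem_range.1 hj)]
      have hsplit : (x t (i+1) : ℤ) - (x s (i+1) : ℤ) =
          ((if t i then (p:ℤ) ^ i else 0) - (if s i then (p:ℤ) ^ i else 0)) := by
        have hs : x s (i+1) = x s i + (if s i then p ^ i else 0) := by
          simp [hxdef, Finset.sum_range_succ]
        have ht : x t (i+1) = x t i + (if t i then p ^ i else 0) := by
          simp [hxdef, Finset.sum_range_succ]
        rw [hs, ht, hxi]
        push_cast
        split_ifs <;> ring
      rw [hsplit] at hmem2
      have hfinal : b ^ ((p : ℤ) ^ i) ∈ powSubgroup A (p ^ (i + 1)) := by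
        cases hsi : s i <;> cases hti : t i
        · exact absurd (hsi.trans hti.symm) hne
        · rw [hsi, hti] at hmem2
          simpa using hmem2
        · rw [hsi, hti] at hmem2
          have h4 := (powSubgroup A (p ^ (i+1))).inv_mem hmem2
          rw [← zpow_neg] at h4
          simpa using h4
        · exact absurd (hsi.trans hti.symm) hne
      refine hb i ?_
      have h5 : ((p : ℤ) ^ i) = ((p ^ i : ℕ) : ℤ) := by push_cast; ring
      rw [h5, zpow_natCast] at hfinal
      exact hfinal
  haveI := hcount
  exact not_countable_funBool hinj.countable

open IntermediateField in
lemma cyclo_abelian {k K : Type*} [Field k] [Field K] [Algebra k K] (ω : K)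
    (hω : IsOfFinOrder ω) :
    IsGalois k (IntermediateField.adjoin k {ω}) ∧
      ∀ σ τ : (IntermediateField.adjoin k {ω} : IntermediateField k K) ≃ₐ[k]
          (IntermediateField.adjoin k {ω} : IntermediateField k K), σ * τ = τ * σ := by
  have hd : 0 < orderOf ω := hω.orderOf_pos
  set d : ℕ+ := ⟨orderOf ω, hd⟩ with hddef
  have hprim : IsPrimitiveRoot ω (d : ℕ) := IsPrimitiveRoot.orderOf ω
  have hωE : ω ∈ IntermediateField.adjoin k ({ω} : Set K) :=
    IntermediateField.mem_adjoin_simple_self k ω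
  set E := IntermediateField.adjoin k ({ω} : Set K) with hEdef
  set ω' : E := ⟨ω, hωE⟩ with hω'def
  have hprim' : IsPrimitiveRoot ω' (d : ℕ) := by
    rw [← IsPrimitiveRoot.coe_submonoidClass_iff]
    exact hprim
  have hint : IsIntegral k ω := by
    refine ⟨Polynomial.X ^ (d : ℕ) - Polynomial.C 1, Polynomial.monic_X_pow_sub_C (1 : k) hd.ne', ?_⟩
    simp [Polynomial.eval₂_sub, hprim.pow_eq_one]
  have hsub : E.toSubalgebra = Algebra.adjoin k ({ω} : Set K) :=
    IntermediateField.adjoin_simple_toSubalgebra_of_isAlgebraic hint.isAlgebraic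
  have hgen : ∀ x : E, x ∈ Algebra.adjoin k ({ω'} : Set E) := by
    intro x
    have hx : (x : K) ∈ Algebra.adjoin k ({ω} : Set K) := by
      rw [← hsub]; exact x.2
    have hmap : (Algebra.adjoin k ({ω'} : Set E)).map E.val
        = Algebra.adjoin k ({ω} : Set K) := by
      rw [AlgHom.map_adjoin]
      congr 1
      simp [hω'def]
    rw [← hmap] at hx
    obtain ⟨y, hy, hxy⟩ := hx
    have hyx : y = x := Subtype.ext hxy
    rwa [hyx] at hy
  haveI hcyc : IsCyclotomicExtension {(d : ℕ)} k E := by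
    constructor
    · rintro n hn -
      rw [Set.mem_singleton_iff] at hn
      subst hn
      exact ⟨ω', hprim'⟩
    · intro x
      refine Algebra.adjoin_mono ?_ (hgen x)
      rintro y hy
      rw [Set.mem_singleton_iff] at hy
      subst hy
      exact ⟨(d : ℕ), Set.mem_singleton _, d.ne_zero, Subtype.ext (by simpa using hprim.pow_eq_one)⟩
  haveI hgal : IsGalois k E := IsCyclotomicExtension.isGalois {(d : ℕ)} k E
  exact ⟨hgal, fun σ τ => (IsCyclotomicExtension.isMulCommutative {(d : ℕ)} k E).is_comm.comm σ τ⟩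

-- root extraction by induction on N
lemma exists_root_mul_torsion {A : Type*} [CommGroup A]
    (H : ∀ p : ℕ, p.Prime → ∀ b : A, ∃ c ζ : A, (∃ M : ℕ, 0 < M ∧ ζ ^ M = 1) ∧ b = c ^ p * ζ) :
    ∀ N : ℕ, 0 < N → ∀ b : A, ∃ c ζ : A, (∃ M : ℕ, 0 < M ∧ ζ ^ M = 1) ∧ b = c ^ N * ζ := by
  intro N
  induction N using Nat.strong_induction_on with
  | _ N IH =>
    intro hN b
    rcases eq_or_ne N 1 with rfl | hN1
    · exact ⟨b, 1, ⟨1, one_pos, one_pow 1⟩, by simp⟩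
    · have hp := Nat.minFac_prime hN1
      obtain ⟨N', hNp⟩ := N.minFac_dvd
      have hN'pos : 0 < N' := by
        rcases Nat.eq_zero_or_pos N' with h0 | h
        · subst h0; simp at hNp; omega
        · exact h
      have hN'lt : N' < N := by
        have h2 : 2 ≤ N.minFac := hp.two_le
        calc N' < N' * 2 := by omega
          _ ≤ N' * N.minFac := by exact Nat.mul_le_mul_left _ h2
          _ = N := by rw [mul_comm]; exact hNp.symm
      obtain ⟨c, ζ₁, ⟨M₁, hM₁, hζ₁⟩, hb⟩ := H N.minFac hp b
      obtain ⟨e, ζ₂, ⟨M₂, hM₂, hζ₂⟩, hc⟩ := IH N' hN'lt hN'pos c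
      refine ⟨e, ζ₂ ^ N.minFac * ζ₁, ⟨M₁ * M₂, by positivity, ?_⟩, ?_⟩
      · have e1 : ζ₂ ^ (N.minFac * (M₁ * M₂)) = 1 := by
          rw [show N.minFac * (M₁ * M₂) = M₂ * (N.minFac * M₁) by ring, pow_mul, hζ₂, one_pow]
        have e2 : ζ₁ ^ (M₁ * M₂) = 1 := by
          rw [pow_mul, hζ₁, one_pow]
        rw [mul_pow, ← pow_mul, e1, e2, one_mul]
      · rw [hb, hc, mul_pow, ← pow_mul, mul_comm N' N.minFac, ← hNp, mul_assoc]

/-- If there are `a ∈ k*`, `n ≥ 1` and a root `α` of `Xⁿ - a`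
in a fixed algebraic closure of `k` such that `k(α)/k` is not an abelian
extension, then `k*^` is uncountable, i.e. `k` has nontrivial Kummer theory. -/
theorem proN_uncountable_of_nonabelian_radical
    (k : Type*) [Field k] [CharZero k]
    (K : Type*) [Field K] [Algebra k K] [IsAlgClosure k K]
    (a : kˣ) (n : ℕ) (hn : 0 < n) (α : K)
    (hα : α ^ n = algebraMap k K (a : k))
    (hnotab : ¬ (IsGalois k (IntermediateField.adjoin k {α}) ∧
      ∀ σ τ : (IntermediateField.adjoin k {α} : IntermediateField k K) ≃ₐ[k]
          (IntermediateField.adjoin k {α} : IntermediateField k K),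
        σ * τ = τ * σ)) :
    ¬ Countable (ProNCompletion kˣ) := by
  intro hcount
  by_cases hgood : ∃ p : ℕ, p.Prime ∧ ∃ b : kˣ, ∀ m : ℕ, b ^ p ^ m ∉ powSubgroup kˣ (p ^ (m + 1))
  · obtain ⟨p, hp, b, hb⟩ := hgood
    exact uncountable_of_good hp b hb hcount
  · push_neg at hgood
    have H : ∀ p : ℕ, p.Prime → ∀ b : kˣ,
        ∃ c ζ : kˣ, (∃ M : ℕ, 0 < M ∧ ζ ^ M = 1) ∧ b = c ^ p * ζ := by
      intro p hp b
      obtain ⟨m, g, hg⟩ := hgood p hp b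
      rw [powMonoidHom_apply] at hg
      refine ⟨g, b * (g ^ p)⁻¹, ⟨p ^ m, pow_pos hp.pos m, ?_⟩, by rw [mul_comm b, ← mul_assoc, mul_inv_cancel, one_mul]⟩
      rw [mul_pow, inv_pow, ← pow_mul, ← pow_succ', hg]
      simp
    obtain ⟨c, ζ, ⟨M, hM, hζM⟩, ha⟩ := exists_root_mul_torsion H n hn a
    have hacast : (a : k) = (c : k) ^ n * (ζ : k) := by
      have := congrArg Units.val ha
      push_cast at this
      exact this
    set cK : K := algebraMap k K (c : k) with hcKdef
    have hcK0 : cK ≠ 0 := (map_ne_zero (algebraMap k K)).mpr (Units.ne_zero c)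
    set ω : K := α * cK⁻¹ with hωdef
    have hak : algebraMap k K (a : k) = cK ^ n * algebraMap k K (ζ : k) := by
      rw [hacast, map_mul, map_pow]
    have hωn : ω ^ n = algebraMap k K (ζ : k) := by
      have h1 : cK ^ n ≠ 0 := pow_ne_zero _ hcK0
      rw [hωdef, mul_pow, hα, hak, inv_pow, mul_comm (cK ^ n) (algebraMap k K (ζ : k)),
        mul_assoc, mul_inv_cancel₀ h1, mul_one]
    have hζMk : (ζ : k) ^ M = 1 := by
      have := congrArg Units.val hζM
      push_cast at this
      exact this
    have hωfin : IsOfFinOrder ω := by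
      refine (isOfFinOrder_iff_pow_eq_one).2 ⟨n * M, by positivity, ?_⟩
      rw [pow_mul, hωn, ← map_pow, hζMk, map_one]
    have hαω : α = ω * cK := by
      rw [hωdef, mul_assoc, inv_mul_cancel₀ hcK0, mul_one]
    have hadj : IntermediateField.adjoin k {α} = IntermediateField.adjoin k {ω} := by
      apply le_antisymm
      · rw [IntermediateField.adjoin_simple_le_iff]
        rw [hαω]
        exact mul_mem (IntermediateField.mem_adjoin_simple_self k ω)
          (IntermediateField.algebraMap_mem _ _)
      · rw [IntermediateField.adjoin_simple_le_iff]
        exact mul_mem (IntermediateField.mem_adjoin_simple_self k α)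
          (inv_mem (IntermediateField.algebraMap_mem _ _))
    obtain ⟨hgal, hcomm⟩ := cyclo_abelian (k := k) ω hωfin
    exact hnotab (by rw [hadj]; exact ⟨hgal, hcomm⟩)
end

section
/- Let E/F be a finite extension of fields of characteristic 0. Then the kernel of the natural map F*^ → E*^ on pro-ℕ completions of multiplicative groups has order at most 2, and the only possibly nontrivial element of this kernel is the class of −1 ∈ F*. -/
/-! ### Auxiliary lemmas -/

open Polynomial IntermediateField

universe uF uE

section Aux


lemma aux_order_two {K : Type*} [Field K] (ζ : Kˣ) (h : orderOf ζ = 2) : ζ = -1 := by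
  have h2 : ζ ^ 2 = 1 := by rw [← h]; exact pow_orderOf_eq_one ζ
  have hne : ζ ≠ 1 := by
    intro e; rw [e, orderOf_one] at h; omega
  have h2' : (ζ : K) * (ζ : K) = 1 := by
    have := congrArg Units.val h2
    rw [Units.val_pow_eq_pow_val, sq] at this; exact this
  rcases mul_self_eq_one_iff.mp h2' with hc | hc
  · exact absurd (Units.ext hc) hne
  · ext; rw [hc]; simp

lemma aux_pow_order {G : Type*} [Group G] (p c : ℕ) (hp : p.Prime) (hc : 1 ≤ c)
    (β γ : G) (hbg : β ^ p = γ) (hγ : orderOf γ = p ^ c) : orderOf β = p ^ (c + 1) := by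
  have h1 : orderOf β ∣ p ^ (c + 1) := by
    apply orderOf_dvd_of_pow_eq_one
    rw [pow_succ, mul_comm (p ^ c) p, pow_mul, hbg, ← hγ, pow_orderOf_eq_one]
  have h2 : p ^ c ∣ orderOf β := by
    rw [← hγ]; exact hbg ▸ orderOf_pow_dvd p
  obtain ⟨i, hi, he⟩ := (Nat.dvd_prime_pow hp).mp h1
  have hci : c ≤ i := by
    rw [he] at h2
    exact (Nat.pow_dvd_pow_iff_le_right hp.one_lt).mp h2
  rcases Nat.eq_or_lt_of_le hci with hcc | hlt
  · exfalso
    have hone : β ^ p ^ c = 1 := by rw [← hcc] at he; rw [← he]; exact pow_orderOf_eq_one β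
    have hg1 : γ ^ p ^ (c - 1) = 1 := by
      rw [← hbg, ← pow_mul, ← pow_succ', Nat.sub_add_cancel hc, hone]
    have := orderOf_dvd_of_pow_eq_one hg1
    rw [hγ] at this
    have := (Nat.pow_dvd_pow_iff_le_right hp.one_lt).mp this
    omega
  · have : i = c + 1 := by omega
    rw [he, this]

lemma aux_eq_pow {K : Type*} [Field K] (g ζ : Kˣ) (N : ℕ) (hN : N ≠ 0)
    (hg : orderOf g = N) (hζ : ζ ^ N = 1) : ∃ e, g ^ e = ζ := by
  haveI : NeZero N := ⟨hN⟩
  have hprim : IsPrimitiveRoot g N :=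
    ⟨by rw [← hg]; exact pow_orderOf_eq_one g, fun l hl => hg ▸ orderOf_dvd_of_pow_eq_one hl⟩
  have hprim' : IsPrimitiveRoot (g : K) N := IsPrimitiveRoot.coe_units_iff.mpr hprim
  have hζ' : (ζ : K) ^ N = 1 := by
    have := congrArg Units.val hζ; rwa [Units.val_pow_eq_pow_val] at this
  obtain ⟨i, _, hi⟩ := hprim'.eq_pow_of_pow_eq_one hζ'
  exact ⟨i, Units.ext (by rw [Units.val_pow_eq_pow_val]; exact hi)⟩


theorem aux_kummer_two (j : ℕ) : ∀ (K : Type u) [Field K], ∀ i a : K, i ^ 2 = -1 →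
    (∀ b : K, b ^ 2 ≠ a) → Irreducible (X ^ 2 ^ j - C a) := by
  induction j with
  | zero =>
    intro K _ i a hi ha
    simpa using irreducible_X_sub_C a
  | succ j IH =>
    intro K _ i a hi ha
    rw [pow_succ]
    apply X_pow_mul_sub_C_irreducible
      (X_pow_sub_C_irreducible_of_prime Nat.prime_two ha)
    intro L _ _ x hx
    have hxint : IsIntegral K x := not_not.mp fun h ↦ by
      simpa only [degree_zero, degree_X_pow_sub_C Nat.prime_two.pos,
        WithBot.natCast_ne_bot] using congr_arg degree (hx.symm.trans (dif_neg h))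
    apply IH K⟮x⟯ (algebraMap K K⟮x⟯ i) (AdjoinSimple.gen K x)
    · rw [← map_pow, hi, map_neg, map_one]
    · intro b hb
      have hnormx : Algebra.norm K (AdjoinSimple.gen K x) = -a := by
        rw [← adjoin.powerBasis_gen hxint, Algebra.PowerBasis.norm_gen_eq_coeff_zero_minpoly]
        simp [minpoly_gen, hx, adjoin.powerBasis_dim]
      apply ha (i * Algebra.norm K b)
      have hnb : (Algebra.norm K b) ^ 2 = -a := by rw [← map_pow, hb, hnormx]
      rw [mul_pow, hi, hnb, neg_mul_neg, one_mul]


lemma aux_deg_bound {F : Type uF} {E : Type uE} [Field F] [Field E] [Algebra F E]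
    [FiniteDimensional F E] (p c k : ℕ) (hp : p.Prime) (hc : 1 ≤ c) (hc2 : p = 2 → 2 ≤ c)
    (g : Fˣ) (hg : orderOf g = p ^ c) (hmax : ∀ β : Fˣ, orderOf β ≠ p ^ (c + 1))
    (z : Eˣ) (hz : orderOf z = p ^ (c + k)) : p ^ k ≤ Module.finrank F E := by
  have hpk : (p : ℕ) ^ k ≠ 0 := pow_ne_zero _ hp.ne_zero
  have hpc : (p : ℕ) ^ c ≠ 0 := pow_ne_zero _ hp.ne_zero
  -- the image of g in E
  set gE : Eˣ := Units.map (algebraMap F E).toMonoidHom g with hgE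
  have hinj : Function.Injective (Units.map (algebraMap F E).toMonoidHom) :=
    Units.map_injective (algebraMap F E).injective
  have hgEord : orderOf gE = p ^ c := by rw [hgE, orderOf_injective _ hinj, hg]
  -- z ^ (p ^ k) has order p ^ c
  have hzk : orderOf (z ^ p ^ k) = p ^ c := by
    rw [orderOf_pow' z hpk, hz, Nat.gcd_eq_right (pow_dvd_pow p (Nat.le_add_left k c)),
      ← Nat.pow_sub_mul_pow p (Nat.le_add_left k c), Nat.add_sub_cancel,
      Nat.mul_div_cancel _ (Nat.pos_of_ne_zero hpk)]
  -- express gE as a power of z ^ (p ^ k)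
  obtain ⟨e, he⟩ := aux_eq_pow (z ^ p ^ k) gE (p ^ c) hpc hzk
    (by rw [← hgEord, pow_orderOf_eq_one])
  set h₁ : Eˣ := z ^ e with hh₁
  have hroot : h₁ ^ p ^ k = gE := by
    rw [hh₁, ← pow_mul, mul_comm, pow_mul, he]
  -- g is not a p-th power in F
  have hnp : ∀ b : F, b ^ p ≠ (g : F) := by
    intro b hb
    have hb0 : b ≠ 0 := fun h => by
      rw [h, zero_pow hp.ne_zero] at hb; exact (Units.ne_zero g) hb.symm
    have : (Units.mk0 b hb0) ^ p = g := Units.ext (by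
      rw [Units.val_pow_eq_pow_val, Units.val_mk0]; exact hb)
    exact hmax _ (aux_pow_order p c hp hc _ _ this hg)
  -- irreducibility of X ^ p ^ k - C g
  have hirr : Irreducible (X ^ p ^ k - C (g : F)) := by
    rcases eq_or_ne p 2 with h2 | h2
    · subst h2
      have hc2' := hc2 rfl
      set i : Fˣ := g ^ 2 ^ (c - 2) with hi
      have hiord : orderOf i = 2 ^ 2 := by
        rw [hi, orderOf_pow' g (pow_ne_zero _ two_ne_zero), hg,
          Nat.gcd_eq_right (pow_dvd_pow 2 (by omega)),
          ← Nat.pow_sub_mul_pow 2 (show c - 2 ≤ c by omega),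
          Nat.sub_sub_self hc2', Nat.mul_div_cancel _ (by positivity)]
      have hisq : i ^ 2 = -1 := by
        apply aux_order_two
        rw [orderOf_pow' i two_ne_zero, hiord]; norm_num
      have : ((i : F)) ^ 2 = -1 := by
        have := congrArg Units.val hisq
        rwa [Units.val_pow_eq_pow_val, Units.val_neg, Units.val_one] at this
      exact aux_kummer_two k F (i : F) (g : F) this (hnp · )
    · exact X_pow_sub_C_irreducible_of_prime_pow hp h2 k (hnp ·)
  -- minpoly argument
  have haev : (Polynomial.aeval (h₁ : E)) (X ^ p ^ k - C (g : F)) = 0 := by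
    have : ((h₁ : Eˣ) : E) ^ p ^ k = algebraMap F E (g : F) := by
      have := congrArg Units.val hroot
      rwa [Units.val_pow_eq_pow_val] at this
    simp [this]
  have hmin : minpoly F ((h₁ : Eˣ) : E) = X ^ p ^ k - C (g : F) :=
    (minpoly.eq_of_irreducible_of_monic hirr haev (monic_X_pow_sub_C _ hpk)).symm
  have := minpoly.natDegree_le (A := F) ((h₁ : Eˣ) : E)
  rwa [hmin, natDegree_X_pow_sub_C] at this


variable {F : Type uF} {E : Type uE} [Field F] [Field E] [Algebra F E] [FiniteDimensional F E]


open scoped Classical in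
lemma aux_prime (p a n m : ℕ) (hp : p.Prime) (ha : 1 ≤ a) (hn : 0 < n) (hm : 0 < m)
    (hval : n.factorization p + Module.finrank F E ≤ m.factorization p)
    (ζ : Fˣ) (hord : orderOf ζ = p ^ a) (u : Eˣ)
    (hu : Units.map (algebraMap F E).toMonoidHom ζ = u ^ m) :
    ∃ θ : Fˣ, ζ = θ ^ n ∨ ζ = -(θ ^ n) := by
  set d := Module.finrank F E with hd
  have hdpos : 0 < d := Module.finrank_pos
  set V := n.factorization p with hV
  set μ := m.factorization p with hμ
  have hpaV1 : 1 < p ^ (a + V) := Nat.one_lt_pow (by omega) hp.one_lt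
  have hpa1 : 1 < p ^ a := Nat.one_lt_pow (by omega) hp.one_lt
  by_cases hcase : ∃ g : Fˣ, orderOf g = p ^ (a + V)
  · -- Case 1 : extract the n-th root inside F
    obtain ⟨g, hg⟩ := hcase
    have hζpow : ζ ^ p ^ (a + V) = 1 := by
      obtain ⟨t, ht⟩ := pow_dvd_pow p (Nat.le_add_right a V)
      rw [ht, pow_mul, ← hord, pow_orderOf_eq_one, one_pow]
    obtain ⟨e, he⟩ := aux_eq_pow g ζ (p ^ (a + V)) (pow_ne_zero _ hp.ne_zero) hg hζpow
    have he0 : e ≠ 0 := by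
      intro h; rw [h, pow_zero] at he
      rw [← he, orderOf_one] at hord
      omega
    have hgcd : Nat.gcd (p ^ (a + V)) e = p ^ V := by
      have h1 : orderOf (g ^ e) = p ^ (a + V) / Nat.gcd (p ^ (a + V)) e := by
        rw [orderOf_pow' g he0, hg]
      rw [he, hord] at h1
      have hdvd : Nat.gcd (p ^ (a + V)) e ∣ p ^ (a + V) := Nat.gcd_dvd_left _ _
      have hmul : p ^ a * Nat.gcd (p ^ (a + V)) e = p ^ (a + V) := by
        rw [h1]; exact Nat.div_mul_cancel hdvd
      have h2 : p ^ a * Nat.gcd (p ^ (a + V)) e = p ^ a * p ^ V := by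
        rw [hmul, ← pow_add]
      exact Nat.eq_of_mul_eq_mul_left (by positivity) h2
    obtain ⟨e₀, he₀⟩ := hgcd ▸ Nat.gcd_dvd_right (p ^ (a + V)) e
    set n₀ := n / p ^ V with hn₀
    have hnsplit : p ^ V * n₀ = n := Nat.ordProj_mul_ordCompl_eq_self n p
    have hcop : Nat.Coprime n₀ (p ^ (a + V)) :=
      ((Nat.coprime_ordCompl hp hn.ne').symm.pow_right _)
    obtain ⟨t, -, ht⟩ := Nat.exists_mul_mod_eq_one_of_coprime hcop hpaV1
    have hmod : n₀ * t ≡ 1 [MOD p ^ (a + V)] := by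
      unfold Nat.ModEq
      rw [ht, Nat.mod_eq_of_lt hpaV1]
    refine ⟨g ^ (e₀ * t), Or.inl ?_⟩
    rw [← pow_mul]
    have hexp : g ^ (e₀ * t * n) = (g ^ e) ^ (n₀ * t) := by
      rw [← pow_mul]; congr 1; rw [← hnsplit, he₀]; ring
    rw [hexp, he]
    conv_lhs => rw [← pow_one ζ]
    exact pow_eq_pow_iff_modEq.mpr (by
      rw [hord]
      exact (Nat.ModEq.of_dvd (pow_dvd_pow p (Nat.le_add_right a V)) hmod).symm)
  · -- Case 2 : contradiction via Kummer towers, except p = 2, c = 1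
    push_neg at hcase
    have hinj : Function.Injective (Units.map (algebraMap F E).toMonoidHom) :=
      Units.map_injective (algebraMap F E).injective
    have hV1 : 1 ≤ V := by
      rcases Nat.eq_zero_or_pos V with h0 | h
      · rw [h0, Nat.add_zero] at hcase; exact absurd hord (hcase ζ)
      · exact h
    -- construct an element of E of large p-power order
    have hupow : u ^ (m * p ^ a) = 1 := by
      rw [pow_mul, ← hu, ← map_pow, ← hord, pow_orderOf_eq_one, map_one]
    have hr0 : orderOf u ≠ 0 := by
      intro h
      have h2 := orderOf_dvd_of_pow_eq_one hupow
      rw [h] at h2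
      have := Nat.eq_zero_of_zero_dvd h2
      have : (0:ℕ) < m * p ^ a := by positivity
      omega
    set r := orderOf u with hr
    set t₁ := r.factorization p with ht₁def
    set r' := r / p ^ t₁ with hr'
    have hr'pos : 0 < r' := Nat.ordCompl_pos p hr0
    have hr'dvd : r' ∣ r := Nat.ordCompl_dvd r p
    have hu'ord : orderOf (u ^ r') = p ^ t₁ := by
      rw [orderOf_pow' u hr'pos.ne', ← hr, Nat.gcd_eq_right hr'dvd]
      conv_lhs => rw [← Nat.ordProj_mul_ordCompl_eq_self r p, ← ht₁def, ← hr']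
      rw [Nat.mul_div_assoc _ dvd_rfl, Nat.div_self hr'pos, mul_one]
    set m₀ := m / p ^ μ with hm₀
    have hm₀pos : 0 < m₀ := Nat.ordCompl_pos p hm.ne'
    have hpm₀ : ¬ p ∣ m₀ := Nat.not_dvd_ordCompl hp hm.ne'
    set u₂ := (u ^ r') ^ m₀ with hu₂
    have hu₂ord : orderOf u₂ = p ^ t₁ := by
      rw [hu₂, orderOf_pow' _ hm₀pos.ne', hu'ord,
        Nat.Coprime.gcd_eq_one (((hp.coprime_iff_not_dvd).2 hpm₀).pow_left _), Nat.div_one]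
    have hu₂pow : u₂ ^ p ^ μ = Units.map (algebraMap F E).toMonoidHom (ζ ^ r') := by
      rw [hu₂, ← pow_mul, ← pow_mul, map_pow, hu, ← pow_mul]
      congr 1
      conv_rhs => rw [← Nat.ordProj_mul_ordCompl_eq_self m p, ← hμ, ← hm₀]
      ring
    have hpr' : ¬ p ∣ r' := Nat.not_dvd_ordCompl hp hr0
    have hζr'ord : orderOf (ζ ^ r') = p ^ a := by
      rw [orderOf_pow' ζ hr'pos.ne', hord,
        Nat.Coprime.gcd_eq_one (((hp.coprime_iff_not_dvd).2 hpr').pow_left _), Nat.div_one]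
    have ht₁ : t₁ = a + μ := by
      have h1 : orderOf (u₂ ^ p ^ μ) = p ^ a := by
        rw [hu₂pow, orderOf_injective _ hinj, hζr'ord]
      rw [orderOf_pow' u₂ (pow_ne_zero μ hp.ne_zero), hu₂ord] at h1
      rcases le_or_gt t₁ μ with hle | hlt
      · rw [Nat.gcd_eq_left (pow_dvd_pow p hle), Nat.div_self (pow_pos hp.pos _)] at h1
        omega
      · rw [Nat.gcd_eq_right (pow_dvd_pow p hlt.le), Nat.pow_div hlt.le hp.pos] at h1
        have := Nat.pow_right_injective hp.two_le h1
        omega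
    -- find the maximal p-power torsion level c of F below a + V
    set c := Nat.findGreatest (fun c' => ∃ g : Fˣ, orderOf g = p ^ c') (a + V) with hcdef
    have hca : a ≤ c := Nat.le_findGreatest (P := fun c' => ∃ g : Fˣ, orderOf g = p ^ c') (by omega : a ≤ a + V) ⟨ζ, hord⟩
    have hcle : c ≤ a + V := Nat.findGreatest_le _
    have hcspec : ∃ g : Fˣ, orderOf g = p ^ c :=
      Nat.findGreatest_spec (P := fun c' => ∃ g : Fˣ, orderOf g = p ^ c') (m := a) (by omega : a ≤ a + V) ⟨ζ, hord⟩
    have hcne : c ≠ a + V := fun h => by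
      obtain ⟨g, hg⟩ := hcspec
      rw [h] at hg
      exact hcase g hg
    have hcmax : ∀ β : Fˣ, orderOf β ≠ p ^ (c + 1) := by
      intro β hβ
      exact Nat.findGreatest_is_greatest (P := fun c' => ∃ g : Fˣ, orderOf g = p ^ c') (n := a + V) (k := c + 1) (by omega) (by omega) ⟨β, hβ⟩
    obtain ⟨g, hg⟩ := hcspec
    by_cases h21 : p = 2 ∧ c = 1
    · -- then a = 1 and ζ = -1
      obtain ⟨hp2, hc1⟩ := h21
      have ha1 : a = 1 := by omega
      refine ⟨1, Or.inr ?_⟩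
      rw [one_pow]
      exact aux_order_two ζ (by rw [hord, ha1, hp2, pow_one])
    · -- otherwise : degree contradiction
      exfalso
      have hc1 : 1 ≤ c := by omega
      have hc2 : p = 2 → 2 ≤ c := by
        intro hp2
        rcases Nat.lt_or_ge c 2 with h | h
        · exact absurd ⟨hp2, by omega⟩ h21
        · exact h
      -- z of order p ^ (c + d)
      have hcd : c + d ≤ t₁ := by omega
      set z := u₂ ^ p ^ (t₁ - (c + d)) with hz
      have hzord : orderOf z = p ^ (c + d) := by
        rw [hz, orderOf_pow' u₂ (pow_ne_zero _ hp.ne_zero), hu₂ord,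
          Nat.gcd_eq_right (pow_dvd_pow p (Nat.sub_le _ _)),
          Nat.pow_div (Nat.sub_le _ _) hp.pos, Nat.sub_sub_self hcd]
      have hbound := aux_deg_bound p c d hp hc1 hc2 g hg hcmax z hzord
      have := Nat.lt_pow_self (n := d) hp.one_lt
      omega


lemma aux_Q : ∀ w : ℕ, 0 < w → ∀ ζ : Fˣ, orderOf ζ = w → ∀ (u : Eˣ) (n m : ℕ), 0 < n → 0 < m →
    (∀ p : ℕ, p.Prime → p ∣ w → n.factorization p + Module.finrank F E ≤ m.factorization p) →
    Units.map (algebraMap F E).toMonoidHom ζ = u ^ m →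
    ∃ θ : Fˣ, ζ = θ ^ n ∨ ζ = -(θ ^ n) := by
  intro w
  induction w using Nat.strong_induction_on with
  | _ w IH =>
  intro hw ζ hζ u n m hn hm hfac hfu
  by_cases hw1 : w = 1
  · subst hw1
    rw [orderOf_eq_one_iff] at hζ
    exact ⟨1, Or.inl (by rw [hζ, one_pow])⟩
  · set p := w.minFac with hpdef
    have hp : p.Prime := Nat.minFac_prime hw1
    set v := w.factorization p with hvdef
    have hv1 : 1 ≤ v := hp.factorization_pos_of_dvd hw.ne' (Nat.minFac_dvd w)
    set w' := w / p ^ v with hw'def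
    have hsplit : p ^ v * w' = w := Nat.ordProj_mul_ordCompl_eq_self w p
    have hw'pos : 0 < w' := Nat.ordCompl_pos p hw.ne'
    have hpw' : ¬ p ∣ w' := Nat.not_dvd_ordCompl hp hw.ne'
    have hpv1 : 1 < p ^ v := Nat.one_lt_pow (by omega) hp.one_lt
    -- inverse of w' mod p ^ v
    obtain ⟨s₁, -, hs₁⟩ := Nat.exists_mul_mod_eq_one_of_coprime
      (((hp.coprime_iff_not_dvd).2 hpw').symm.pow_right v) hpv1
    set s := s₁ % p ^ v with hsdef
    have hs : w' * s % p ^ v = 1 := by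
      rw [hsdef, Nat.mul_mod, Nat.mod_mod_of_dvd, ← Nat.mul_mod, hs₁]
      exact dvd_rfl
    have hps : ¬ p ∣ s := by
      intro hdvd
      obtain ⟨s₂, hs₂⟩ := hdvd
      have h1 : (w' * s) % p = 0 := by
        rw [hs₂, show w' * (p * s₂) = p * (w' * s₂) by ring, Nat.mul_mod_right]
      have h2 : (w' * s) % p = 1 := by
        rw [← Nat.mod_mod_of_dvd _ (dvd_pow_self p (by omega : v ≠ 0)), hs,
          Nat.mod_eq_of_lt hp.one_lt]
      omega
    have hspos : 0 < s := by
      rcases Nat.eq_zero_or_pos s with h0 | h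
      · rw [h0, Nat.mul_zero, Nat.zero_mod] at hs; omega
      · exact h
    have hslt : s < p ^ v := Nat.mod_lt _ (by omega)
    set k₁ := w' * s with hk₁def
    have hk₁pos : 0 < k₁ := Nat.mul_pos hw'pos hspos
    have hk₁lt : k₁ < w := by
      calc k₁ = w' * s := rfl
      _ < w' * p ^ v := by exact (Nat.mul_lt_mul_left hw'pos).mpr hslt
      _ = w := by rw [mul_comm]; exact hsplit
    set K := 1 + w - k₁ with hKdef
    have hkK : k₁ + K = 1 + w := by omega
    have hKpos : 0 < K := by omega
    -- ζ decomposes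
    have hzw : ζ ^ w = 1 := by rw [← hζ, pow_orderOf_eq_one]
    have hdecomp : ζ ^ k₁ * ζ ^ K = ζ := by
      rw [← pow_add, hkK, pow_add, pow_one, hzw, mul_one]
    -- order of ζ ^ k₁ is p ^ v
    have hk₁gcd : Nat.gcd w k₁ = w' := by
      rw [hk₁def, ← hsplit, mul_comm (p ^ v) w']
      rw [Nat.gcd_mul_left]
      have hcop : Nat.gcd (p ^ v) s = 1 := ((hp.coprime_iff_not_dvd).2 hps).pow_left v
      rw [hcop, mul_one]
    have hζpord : orderOf (ζ ^ k₁) = p ^ v := by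
      rw [orderOf_pow' ζ hk₁pos.ne', hζ, hk₁gcd, ← hsplit,
        Nat.mul_div_assoc _ dvd_rfl, Nat.div_self hw'pos, mul_one]
    -- order of ζ ^ K is w'
    have hpvK : p ^ v ∣ K := by
      have hw0 : w ≡ 0 [MOD p ^ v] := (Nat.modEq_zero_iff_dvd).mpr ⟨w', hsplit.symm⟩
      have hk₁1 : k₁ ≡ 1 [MOD p ^ v] := by
        unfold Nat.ModEq; rw [hs, Nat.mod_eq_of_lt hpv1]
      have hsum : k₁ + K ≡ 1 + 0 [MOD p ^ v] := by
        rw [hkK]; exact (Nat.ModEq.refl 1).add hw0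
      exact (Nat.modEq_zero_iff_dvd).mp (hk₁1.add_left_cancel hsum)
    have hw'K : Nat.Coprime w' K := by
      have h1 : w' ∣ K - 1 := by
        have : K - 1 = w - k₁ := by omega
        rw [this]
        exact Nat.dvd_sub ⟨p ^ v, by rw [mul_comm]; exact hsplit.symm⟩ ⟨s, rfl⟩
      have h2 : Nat.gcd w' K ∣ 1 := by
        have := Nat.dvd_sub (Nat.gcd_dvd_right w' K) ((Nat.gcd_dvd_left w' K).trans h1)
        rwa [Nat.sub_sub_self (by omega : 1 ≤ K)] at this
      exact Nat.dvd_one.mp h2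
    have hKgcd : Nat.gcd w K = p ^ v := by
      rw [← hsplit, mul_comm (p ^ v) w', Nat.Coprime.gcd_mul_left_cancel _ hw'K]
      exact Nat.gcd_eq_left hpvK
    have hζKord : orderOf (ζ ^ K) = w' := by
      rw [orderOf_pow' ζ hKpos.ne', hζ, hKgcd, ← hsplit,
        Nat.mul_div_cancel_left _ (by positivity)]
    have hw'lt : w' < w := by
      calc w' = 1 * w' := (one_mul w').symm
      _ < p ^ v * w' := by exact (Nat.mul_lt_mul_right hw'pos).mpr hpv1
      _ = w := hsplit
    -- recursive call on ζ ^ K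
    obtain ⟨θ₂, hθ₂⟩ := IH w' hw'lt hw'pos (ζ ^ K) hζKord (u ^ K) n m hn hm
      (fun q hq hqw' => hfac q hq (hqw'.trans ⟨p ^ v, by rw [mul_comm]; exact hsplit.symm⟩))
      (by rw [map_pow, hfu, ← pow_mul, ← pow_mul, mul_comm m K])
    -- aux_prime on ζ ^ k₁
    obtain ⟨θ₁, hθ₁⟩ := aux_prime p v n m hp hv1 hn hm
      (hfac p hp (Nat.minFac_dvd w)) (ζ ^ k₁) hζpord (u ^ k₁)
      (by rw [map_pow, hfu, ← pow_mul, ← pow_mul, mul_comm m k₁])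
    refine ⟨θ₁ * θ₂, ?_⟩
    rw [← hdecomp, mul_pow]
    rcases hθ₁ with h1 | h1 <;> rcases hθ₂ with h2 | h2 <;> rw [h1, h2]
    · exact Or.inl rfl
    · exact Or.inr (by rw [mul_neg])
    · exact Or.inr (by rw [neg_mul])
    · exact Or.inl (by rw [neg_mul_neg])

end Aux

/-- For a finite extension `E/F` of fields of characteristic zero,
the kernel of the natural map `F*^ → E*^` on pro-ℕ completions has order at most
two, with the class of `-1` the only possibly nontrivial element. -/
theorem proN_kernel_le_two
    (F E : Type*) [Field F] [Field E] [CharZero F] [Algebra F E]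
    [FiniteDimensional F E] :
    ∀ x : ProNCompletion Fˣ,
      ProNMap (Units.map (algebraMap F E).toMonoidHom) x = 1 →
      x = 1 ∨ x = toProN Fˣ (-1) := by
  classical
  intro x hx
  set f : Fˣ →* Eˣ := Units.map (algebraMap F E).toMonoidHom with hfdef
  set d := Module.finrank F E with hddef
  have hdpos : 0 < d := Module.finrank_pos
  -- Step 1: at every level, x is represented by 1 or -1
  have hstar : ∀ n : ℕ+, ∃ ε : Fˣ, (ε = 1 ∨ ε = -1) ∧
      x.1 n = (QuotientGroup.mk ε : Fˣ ⧸ powSubgroup Fˣ (n : ℕ)) := by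
    intro n
    set mB : ℕ+ := ⟨d ^ (3 * d), pow_pos hdpos _⟩ with hmBdef
    set m : ℕ+ := n * mB with hmdef
    set M : ℕ+ := m * ⟨d, hdpos⟩ with hMdef
    have hMm : (M : ℕ) = (m : ℕ) * d := rfl
    have hmn : (m : ℕ) = (n : ℕ) * (mB : ℕ) := rfl
    obtain ⟨a, ha⟩ := QuotientGroup.mk_surjective (x.1 M)
    -- the kernel condition at level M
    have hxM : levelMap f (M : ℕ) (x.1 M) = 1 := by
      have h1 := congrArg Subtype.val hx
      exact congrFun h1 M
    have hfa : f a ∈ powSubgroup Eˣ (M : ℕ) := by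
      rw [← ha, levelMap, QuotientGroup.map_mk] at hxM
      exact (QuotientGroup.eq_one_iff _).mp hxM
    obtain ⟨b, hb⟩ := hfa
    rw [powMonoidHom_apply] at hb
    -- the norm map on units
    set ν : Eˣ →* Fˣ := Units.map (Algebra.norm F : E →* F) with hνdef
    have hνf : ∀ y : Fˣ, ν (f y) = y ^ d := by
      intro y
      ext
      show (Algebra.norm F) ((algebraMap F E) (y : F)) = ((y ^ d : Fˣ) : F)
      rw [Algebra.norm_algebraMap, Units.val_pow_eq_pow_val, hddef]
    set ζ : Fˣ := a * (((ν b) ^ (m : ℕ))⁻¹) with hζdef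
    have haζ : a = ζ * (ν b) ^ (m : ℕ) := by rw [hζdef, inv_mul_cancel_right]
    have had : a ^ d = ((ν b) ^ (m : ℕ)) ^ d := by
      have h1 : a ^ d = ν (f a) := (hνf a).symm
      rw [← hb, map_pow, hMm, pow_mul] at h1
      exact h1
    have hζd : ζ ^ d = 1 := by
      rw [hζdef, mul_pow, inv_pow, had, mul_inv_cancel]
    have hfζ : f ζ = (b ^ d * (f (ν b))⁻¹) ^ (m : ℕ) := by
      rw [hζdef, map_mul, map_inv, map_pow, mul_pow, inv_pow, ← hb, hMm]
      congr 1
      rw [← pow_mul, mul_comm (m : ℕ) d]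
    set w := orderOf ζ with hwdef
    have hw : w ∣ d := orderOf_dvd_of_pow_eq_one hζd
    have hwpos : 0 < w := by
      rcases Nat.eq_zero_or_pos w with h0 | h
      · rw [h0] at hw; omega
      · exact h
    have hfac : ∀ p : ℕ, p.Prime → p ∣ w →
        (n : ℕ).factorization p + d ≤ (m : ℕ).factorization p := by
      intro p hp hpw
      have hpd : p ∣ d := hpw.trans hw
      have hk1 : 1 ≤ d.factorization p := hp.factorization_pos_of_dvd hdpos.ne' hpd
      have hmf : (m : ℕ).factorization p
          = (n : ℕ).factorization p + 3 * d * d.factorization p := by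
        rw [hmn, Nat.factorization_mul n.pos.ne' (by positivity : (mB:ℕ) ≠ 0)]
        show (n : ℕ).factorization p + (d ^ (3 * d)).factorization p = _
        rw [Nat.factorization_pow]
        simp [mul_comm]
      have h3 : 3 * d ≤ 3 * d * d.factorization p := Nat.le_mul_of_pos_right _ hk1
      omega
    obtain ⟨θ, hθ⟩ := aux_Q w hwpos ζ hwdef.symm (b ^ d * (f (ν b))⁻¹)
      (n : ℕ) (m : ℕ) n.pos m.pos hfac hfζ
    -- level n value
    have hxn : x.1 n = (QuotientGroup.mk ζ : Fˣ ⧸ powSubgroup Fˣ (n : ℕ)) := by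
      have hdvd : (n : ℕ) ∣ (M : ℕ) := ⟨(mB : ℕ) * d, by rw [hMm, hmn]; ring⟩
      have hcomp := x.2 n M hdvd
      rw [← ha] at hcomp
      rw [← hcomp, powTransition, QuotientGroup.map_mk, MonoidHom.id_apply, haζ,
        QuotientGroup.mk_mul]
      have hone : (QuotientGroup.mk ((ν b) ^ (m : ℕ)) : Fˣ ⧸ powSubgroup Fˣ (n : ℕ)) = 1 := by
        apply (QuotientGroup.eq_one_iff _).mpr
        exact ⟨(ν b) ^ (mB : ℕ), by
          rw [powMonoidHom_apply, ← pow_mul, hmn, mul_comm]⟩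
      rw [hone, mul_one]
    rcases hθ with h | h
    · refine ⟨1, Or.inl rfl, ?_⟩
      rw [hxn, h]
      have h1 : (QuotientGroup.mk (θ ^ (n : ℕ)) : Fˣ ⧸ powSubgroup Fˣ (n : ℕ)) = 1 :=
        (QuotientGroup.eq_one_iff _).mpr ⟨θ, rfl⟩
      rw [h1, QuotientGroup.mk_one]
    · refine ⟨-1, Or.inr rfl, ?_⟩
      rw [hxn, h, show -(θ ^ (n:ℕ)) = -1 * θ ^ (n:ℕ) by rw [neg_one_mul],
        QuotientGroup.mk_mul]
      have h1 : (QuotientGroup.mk (θ ^ (n : ℕ)) : Fˣ ⧸ powSubgroup Fˣ (n : ℕ)) = 1 :=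
        (QuotientGroup.eq_one_iff _).mpr ⟨θ, rfl⟩
      rw [h1, mul_one]
  -- Step 2: endgame
  by_cases hall : ∀ n : ℕ+, x.1 n = 1
  · left
    apply Subtype.ext
    funext n
    exact hall n
  · right
    push_neg at hall
    obtain ⟨n₀, hn₀⟩ := hall
    apply Subtype.ext
    funext n
    show x.1 n = (QuotientGroup.mk (-1) : Fˣ ⧸ powSubgroup Fˣ (n : ℕ))
    obtain ⟨ε, hε, hxn⟩ := hstar (n * n₀)
    rcases hε with rfl | rfl
    · exfalso
      apply hn₀
      have hdvd : (n₀ : ℕ) ∣ ((n * n₀ : ℕ+) : ℕ) := ⟨(n : ℕ), by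
        simp [PNat.mul_coe, mul_comm]⟩
      have hcomp := x.2 n₀ (n * n₀) hdvd
      rw [hxn, QuotientGroup.mk_one, map_one] at hcomp
      exact hcomp.symm
    · have hdvd : (n : ℕ) ∣ ((n * n₀ : ℕ+) : ℕ) := ⟨(n₀ : ℕ), by simp [PNat.mul_coe]⟩
      have hcomp := x.2 n (n * n₀) hdvd
      rw [hxn, powTransition, QuotientGroup.map_mk, MonoidHom.id_apply] at hcomp
      exact hcomp.symm
end

section
/- Let k be a field of characteristic 0 and n a positive integer. Every element x of the pro-ℕ completion k*^ with xⁿ = 1 lies in the image of the natural map k* → k*^ restricted to the group μ_n(k) of n-th roots of unity in k; that is, the n-torsion subgroup of k*^ is generated by (equals) the image of μ_n(k). -/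
/-- The `n`-torsion of the pro-ℕ completion `k*^` equals the
image of the group `μ_n(k)` of `n`-th roots of unity of `k` under the natural map
`k* → k*^`. -/
theorem proN_torsion_from_roots_of_unity
    (k : Type*) [Field k] [CharZero k] (n : ℕ) (hn : 0 < n)
    (x : ProNCompletion kˣ) (hx : x ^ n = 1) :
    ∃ ζ : kˣ, ζ ^ n = 1 ∧ toProN kˣ ζ = x := by
  haveI : NeZero n := ⟨hn.ne'⟩
  -- Step 1: at every level `m`, the class `x_m` is represented by an `n`-th root of unity.
  have key : ∀ m : ℕ+, ∃ ζ : kˣ, ζ ∈ rootsOfUnity n k ∧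
      (QuotientGroup.mk ζ : kˣ ⧸ powSubgroup kˣ (m : ℕ)) = x.1 m := by
    intro m
    set M : ℕ+ := ⟨n, hn⟩ * m with hM
    obtain ⟨a, ha⟩ := QuotientGroup.mk_surjective (x.1 M)
    have hxn : (x.1 M) ^ n = 1 := by
      have h1 := congrArg (fun y : ProNCompletion kˣ => y.1 M) hx
      simpa using h1
    have han : (QuotientGroup.mk (a ^ n) : kˣ ⧸ powSubgroup kˣ (M : ℕ)) = 1 := by
      rw [QuotientGroup.mk_pow, ha, hxn]
    obtain ⟨b, hb⟩ := (QuotientGroup.eq_one_iff _).1 han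
    -- hb : b ^ (M : ℕ) = a ^ n
    have hb' : b ^ ((n : ℕ) * (m : ℕ)) = a ^ n := hb
    refine ⟨a * (b ^ (m : ℕ))⁻¹, ?_, ?_⟩
    · rw [mem_rootsOfUnity]
      rw [mul_pow, inv_pow, ← pow_mul, mul_comm (m : ℕ) n, hb']
      group
    · have hdvd : (m : ℕ) ∣ (M : ℕ) := ⟨n, by simp [hM, mul_comm]; exact PNat.mul_coe _ _⟩
      have htrans := x.2 m M hdvd
      rw [← htrans, ← ha]
      have : powTransition kˣ hdvd (QuotientGroup.mk a) = QuotientGroup.mk a := rfl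
      rw [this]
      refine (QuotientGroup.eq).2 ?_
      refine ⟨b, ?_⟩
      simp [powMonoidHom_apply, mul_comm, mul_assoc]
  choose g hg1 hg2 using key
  -- Step 2: pigeonhole along the cofinal chain of factorials.
  haveI : Fintype (rootsOfUnity n k) := Fintype.ofFinite _
  let fac : ℕ → ℕ+ := fun j => ⟨Nat.factorial (j + 1), Nat.factorial_pos _⟩
  let f : ℕ → rootsOfUnity n k := fun j => ⟨g (fac j), hg1 (fac j)⟩
  obtain ⟨ζ, hζ⟩ := Finite.exists_infinite_fiber f
  refine ⟨(ζ : kˣ), (mem_rootsOfUnity n _).1 ζ.2, ?_⟩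
  apply Subtype.ext
  funext m
  obtain ⟨j, hj, hjm⟩ := (Set.infinite_coe_iff.1 hζ).exists_gt (m : ℕ)
  have hd : (m : ℕ) ∣ ((fac j : ℕ+) : ℕ) := Nat.dvd_factorial m.pos (by omega)
  have htrans := x.2 m (fac j) hd
  have hval : g (fac j) = (ζ : kˣ) := congrArg Subtype.val hj
  have : (toProN kˣ (ζ : kˣ)).1 m = x.1 m := by
    rw [← htrans, ← hg2 (fac j), hval]
    rfl
  exact this
end

section
/- Let ζ₁, ζ₂, ζ₃, ζ₄ ∈ ℂ be pairwise distinct roots of unity and suppose their double ratio λ = DV(ζ₁,ζ₂;ζ₃,ζ₄) is a rational number. Then λ belongs to the set {2, −1, 1/2, 3, 1/3, −2, −1/2, 2/3, 3/2, 4, 1/4, −3, −1/3, 4/3, 3/4}. -/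
open Polynomial Finset

/-- The double ratio `DV(a₁,a₂;a₃,a₄) = ((a₁−a₃)/(a₁−a₄)) · ((a₂−a₄)/(a₂−a₃))`. -/
def doubleRatio {L : Type*} [Field L] (a₁ a₂ a₃ a₄ : L) : L :=
  ((a₁ - a₃) / (a₁ - a₄)) * ((a₂ - a₄) / (a₂ - a₃))

/-- The 22-element set of candidate values (closed under negation). -/
def Tset : Set ℚ :=
  {1, -1, 2, -2, 4, -4, 1/2, -1/2, 1/4, -1/4, 3, -3, 1/3, -1/3,
   3/2, -3/2, 2/3, -2/3, 4/3, -4/3, 3/4, -3/4}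

lemma prodA {n : ℕ} [NeZero n] (hn : 2 ≤ n) {ρ : ℂ} (hρn : ρ ^ n = 1) (hρ1 : ρ ≠ 1) :
    ∃ P e : ℕ, (P = 1 ∨ (P.Prime ∧ e * (P - 1) ≤ n.totient)) ∧
      ∏ k : (ZMod n)ˣ, (1 - ρ ^ ((k : ZMod n).val)) = (P : ℂ) ^ e := by
  have hford : IsOfFinOrder ρ :=
    isOfFinOrder_iff_pow_eq_one.mpr ⟨n, Nat.pos_of_ne_zero (NeZero.ne n), hρn⟩
  have hm0 : 0 < orderOf ρ := hford.orderOf_pos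
  set m := orderOf ρ with hmdef
  have hmn : m ∣ n := orderOf_dvd_of_pow_eq_one hρn
  have hm1 : 1 < m := by
    by_contra h
    have hmeq : m = 1 := by omega
    exact hρ1 (orderOf_eq_one_iff.mp hmeq)
  haveI : NeZero m := ⟨by omega⟩
  have hprim : IsPrimitiveRoot ρ m := IsPrimitiveRoot.orderOf ρ
  set π : (ZMod n)ˣ →* (ZMod m)ˣ := ZMod.unitsMap hmn with hπdef
  have hπs : Function.Surjective π := ZMod.unitsMap_surjective hmn
  have hπval : ∀ k : (ZMod n)ˣ, ((π k : ZMod m)).val = (k : ZMod n).val % m := by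
    intro k
    have : (π k : ZMod m) = ZMod.castHom hmn (ZMod m) (k : ZMod n) := rfl
    rw [this, ZMod.castHom_apply, ← ZMod.natCast_val, ZMod.val_natCast]
  have hpoint : ∀ k : (ZMod n)ˣ, ρ ^ ((k : ZMod n).val) = ρ ^ ((π k : ZMod m)).val := by
    intro k
    rw [hπval k]
    exact (pow_mod_orderOf ρ _).symm
  -- fibers of π all have the same cardinality
  have hfib : ∀ u : (ZMod m)ˣ, (univ.filter (fun k => π k = u)).card
      = (univ.filter (fun k => π k = 1)).card := by
    intro u
    obtain ⟨k₀, hk₀⟩ := hπs u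
    apply Finset.card_bij (fun k _ => k * k₀⁻¹)
    · intro a ha
      simp only [mem_filter, mem_univ, true_and] at ha ⊢
      rw [map_mul, ha, map_inv, hk₀, mul_inv_cancel]
    · intro a ha b hb hab
      exact mul_right_cancel hab
    · intro b hb
      simp only [mem_filter, mem_univ, true_and] at hb
      refine ⟨b * k₀, ?_, by group⟩
      simp only [mem_filter, mem_univ, true_and, map_mul, hb, hk₀, one_mul]
  set c := (univ.filter (fun k : (ZMod n)ˣ => π k = 1)).card with hcdef
  have hc : n.totient = m.totient * c := by
    have h1 : (univ : Finset (ZMod n)ˣ).card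
        = ∑ u ∈ (univ : Finset (ZMod n)ˣ).image π, (univ.filter (fun k => π k = u)).card :=
      Finset.card_eq_sum_card_image π univ
    rw [Finset.image_univ_of_surjective hπs] at h1
    simp_rw [fun u => hfib u] at h1
    rw [Finset.sum_const, smul_eq_mul, Finset.card_univ, Finset.card_univ] at h1
    rw [← ZMod.card_units_eq_totient n, ← ZMod.card_units_eq_totient m, h1]
  -- split product along fibers
  have hsplit : ∏ k : (ZMod n)ˣ, (1 - ρ ^ ((k : ZMod n).val))
      = (∏ u : (ZMod m)ˣ, (1 - ρ ^ ((u : ZMod m)).val)) ^ c := by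
    calc ∏ k : (ZMod n)ˣ, (1 - ρ ^ ((k : ZMod n).val))
        = ∏ k : (ZMod n)ˣ, (1 - ρ ^ ((π k : ZMod m)).val) := by
          exact Finset.prod_congr rfl (fun k _ => by rw [hpoint k])
      _ = ∏ u ∈ (univ : Finset (ZMod n)ˣ).image π,
            (1 - ρ ^ ((u : ZMod m)).val) ^ (univ.filter (fun k => π k = u)).card :=
          Finset.prod_comp (fun u : (ZMod m)ˣ => 1 - ρ ^ ((u : ZMod m)).val) π
      _ = ∏ u : (ZMod m)ˣ, (1 - ρ ^ ((u : ZMod m)).val) ^ c := by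
          rw [Finset.image_univ_of_surjective hπs]
          exact Finset.prod_congr rfl (fun u _ => by rw [hfib u])
      _ = (∏ u : (ZMod m)ˣ, (1 - ρ ^ ((u : ZMod m)).val)) ^ c := by
          rw [Finset.prod_pow]
  -- the inner product is the cyclotomic value
  have hprodm : ∏ u : (ZMod m)ˣ, (1 - ρ ^ ((u : ZMod m)).val) = (cyclotomic m ℂ).eval 1 := by
    rw [cyclotomic_eq_prod_X_sub_primitiveRoots hprim, eval_prod]
    simp only [eval_sub, eval_X, eval_C]
    apply Finset.prod_bij (fun (u : (ZMod m)ˣ) _ => ρ ^ ((u : ZMod m)).val)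
    · intro u _
      exact (mem_primitiveRoots hm0).mpr
        (hprim.pow_of_coprime _ (ZMod.val_coe_unit_coprime u))
    · intro a _ b _ hab
      have ha := ZMod.val_lt (a : ZMod m)
      have hb := ZMod.val_lt (b : ZMod m)
      have : (a : ZMod m).val = (b : ZMod m).val := hprim.pow_inj ha hb hab
      ext
      exact ZMod.val_injective m this
    · intro μ hμ
      have hμp : IsPrimitiveRoot μ m := (mem_primitiveRoots hm0).mp hμ
      obtain ⟨i, hilt, hieq⟩ := hprim.eq_pow_of_pow_eq_one hμp.pow_eq_one
      have hicop : i.Coprime m := (hprim.pow_iff_coprime hm0 i).mp (hieq ▸ hμp)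
      refine ⟨ZMod.unitOfCoprime i hicop, mem_univ _, ?_⟩
      have : ((ZMod.unitOfCoprime i hicop : ZMod m)).val = i := by
        simp [ZMod.coe_unitOfCoprime, ZMod.val_natCast, Nat.mod_eq_of_lt hilt]
      rw [this, hieq]
    · intro u _
      rfl
  have hcast : (cyclotomic m ℂ).eval 1 = (((cyclotomic m ℤ).eval 1 : ℤ) : ℂ) := by
    rw [← map_cyclotomic_int m ℂ, eval_map, eval₂_at_one]
    rfl
  by_cases hpp : IsPrimePow m
  · obtain ⟨p, k, hp, hk, hpk⟩ := hpp
    have hpnat : p.Prime := Nat.prime_iff.mpr hp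
    haveI : Fact p.Prime := ⟨hpnat⟩
    have htp : m.totient = p ^ (k - 1) * (p - 1) := by
      rw [← hpk]; exact Nat.totient_prime_pow hpnat hk
    refine ⟨p, c, Or.inr ⟨hpnat, ?_⟩, ?_⟩
    · have h1 : (p - 1) ≤ m.totient := by
        rw [htp]
        calc p - 1 = 1 * (p - 1) := (one_mul _).symm
          _ ≤ p ^ (k - 1) * (p - 1) := Nat.mul_le_mul_right _ (Nat.one_le_pow _ _ hpnat.pos)
      calc c * (p - 1) ≤ c * m.totient := Nat.mul_le_mul_left _ h1
        _ = n.totient := by rw [hc]; ring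
    · obtain ⟨j, rfl⟩ : ∃ j, k = j + 1 := ⟨k - 1, by omega⟩
      rw [hsplit, hprodm, hcast, ← hpk, eval_one_cyclotomic_prime_pow]
      push_cast
      ring
  · refine ⟨1, c, Or.inl rfl, ?_⟩
    have h' : ∀ {p : ℕ}, p.Prime → ∀ k : ℕ, p ^ k ≠ m := by
      intro p hp k hpk
      rcases Nat.eq_zero_or_pos k with rfl | hk
      · simp at hpk; omega
      · exact hpp ⟨p, k, Nat.prime_iff.mp hp, hk, hpk⟩
    rw [hsplit, hprodm, hcast, eval_one_cyclotomic_not_prime_pow h']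
    simp

set_option maxHeartbeats 1000000 in
lemma lemC (N : ℕ) (hNe : Even N) (hN : 0 < N) (q : ℚ) (hq0 : q ≠ 0)
    (Pa ea Pb eb Pc ec Pd ed : ℕ)
    (hPa : Pa = 1 ∨ (Pa.Prime ∧ ea * (Pa - 1) ≤ N))
    (hPb : Pb = 1 ∨ (Pb.Prime ∧ eb * (Pb - 1) ≤ N))
    (hPc : Pc = 1 ∨ (Pc.Prime ∧ ec * (Pc - 1) ≤ N))
    (hPd : Pd = 1 ∨ (Pd.Prime ∧ ed * (Pd - 1) ≤ N))
    (heq : q ^ N * ((Pc ^ ec * Pd ^ ed : ℕ) : ℚ) = ((Pa ^ ea * Pb ^ eb : ℕ) : ℚ)) :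
    q ∈ Tset := by
  have hone : ∀ P e : ℕ, (P = 1 ∨ (P.Prime ∧ e * (P - 1) ≤ N)) → P ≠ 0 := by
    rintro P e (rfl | ⟨hp, _⟩)
    · exact one_ne_zero
    · exact hp.pos.ne'
  have hPa0 := hone _ _ hPa
  have hPb0 := hone _ _ hPb
  have hPc0 := hone _ _ hPc
  have hPd0 := hone _ _ hPd
  set u := q.num.natAbs with hudef
  set v := q.den with hvdef
  have hv0 : v ≠ 0 := q.den_pos.ne'
  have hu0 : u ≠ 0 := Int.natAbs_ne_zero.mpr (Rat.num_ne_zero.mpr hq0)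
  have hcop : Nat.Coprime u v := q.reduced
  have hvQ : (v : ℚ) ≠ 0 := Nat.cast_ne_zero.mpr hv0
  have habs : |q| = (u : ℚ) / (v : ℚ) := by
    rw [← Rat.num_div_den q, abs_div]
    congr 1
    · rw [← Int.cast_abs, Int.abs_eq_natAbs, Int.cast_natCast]
    · exact abs_of_pos (by exact_mod_cast q.den_pos)
  have hqN : q ^ N = ((u : ℚ) / (v : ℚ)) ^ N := by rw [← habs, Even.pow_abs hNe]
  have hNat : u ^ N * (Pc ^ ec * Pd ^ ed) = (Pa ^ ea * Pb ^ eb) * v ^ N := by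
    have h1 : (u : ℚ) ^ N * ((Pc ^ ec * Pd ^ ed : ℕ) : ℚ)
        = ((Pa ^ ea * Pb ^ eb : ℕ) : ℚ) * (v : ℚ) ^ N := by
      rw [hqN, div_pow, div_mul_eq_mul_div, div_eq_iff (pow_ne_zero _ hvQ)] at heq
      exact heq
    exact_mod_cast h1
  have hCD0 : Pc ^ ec * Pd ^ ed ≠ 0 := by positivity
  have hAB0 : Pa ^ ea * Pb ^ eb ≠ 0 := by positivity
  have slot : ∀ P e : ℕ, (P = 1 ∨ (P.Prime ∧ e * (P - 1) ≤ N)) → ∀ p : ℕ, p.Prime →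
      (P ^ e).factorization p = if P = p then e else 0 := by
    rintro P e (rfl | ⟨hPp, _⟩) p hp
    · simp only [one_pow, Nat.factorization_one, Finsupp.coe_zero, Pi.zero_apply]
      rw [if_neg]
      exact fun h => hp.one_lt.ne' h.symm
    · rw [Nat.factorization_pow, Finsupp.smul_apply, hPp.factorization, Finsupp.single_apply,
        smul_eq_mul, mul_ite, mul_one, mul_zero]
  have key : ∀ p : ℕ, p.Prime →
      N * u.factorization p + ((if Pc = p then ec else 0) + (if Pd = p then ed else 0))
      = N * v.factorization p + ((if Pa = p then ea else 0) + (if Pb = p then eb else 0)) := by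
    intro p hp
    have h := congrArg (fun t => t.factorization p) hNat
    rw [Nat.factorization_mul (pow_ne_zero _ hu0) hCD0,
        Nat.factorization_mul hAB0 (pow_ne_zero _ hv0),
        Nat.factorization_mul (pow_ne_zero _ hPc0) (pow_ne_zero _ hPd0),
        Nat.factorization_mul (pow_ne_zero _ hPa0) (pow_ne_zero _ hPb0)] at h
    simp only [Finsupp.add_apply] at h
    rw [slot _ _ hPc p hp, slot _ _ hPd p hp, slot _ _ hPa p hp, slot _ _ hPb p hp,
        Nat.factorization_pow, Nat.factorization_pow] at h
    simp only [Finsupp.smul_apply, smul_eq_mul] at h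
    omega
  have hbound : ∀ P e : ℕ, (P = 1 ∨ (P.Prime ∧ e * (P - 1) ≤ N)) → ∀ p : ℕ, p.Prime →
      (if P = p then e else 0) * (p - 1) ≤ N := by
    intro P e hP p hp
    split_ifs with h
    · rcases hP with rfl | ⟨_, hb⟩
      · exact absurd h.symm hp.one_lt.ne'
      · rwa [← h]
    · simp
  have hexcl : ∀ p : ℕ, p.Prime → u.factorization p = 0 ∨ v.factorization p = 0 := by
    intro p hp
    by_contra h
    push_neg at h
    have h1 : p ∣ u := Nat.dvd_of_factorization_pos h.1
    have h2 : p ∣ v := Nat.dvd_of_factorization_pos h.2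
    have h3 := Nat.dvd_gcd h1 h2
    rw [hcop] at h3
    exact hp.one_lt.ne' (Nat.dvd_one.mp h3)
  -- no primes other than 2 and 3 occur
  have hother : ∀ p : ℕ, p.Prime → p ≠ 2 → p ≠ 3 →
      u.factorization p = 0 ∧ v.factorization p = 0 := by
    intro p hp hp2 hp3
    have hp5 : 5 ≤ p := by
      have h2 := hp.two_le
      have h4 : p ≠ 4 := by rintro rfl; norm_num at hp
      omega
    have h4p : 4 ≤ p - 1 := by omega
    have b4a : (if Pa = p then ea else 0) * 4 ≤ N :=
      le_trans (Nat.mul_le_mul_left _ h4p) (hbound _ _ hPa p hp)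
    have b4b : (if Pb = p then eb else 0) * 4 ≤ N :=
      le_trans (Nat.mul_le_mul_left _ h4p) (hbound _ _ hPb p hp)
    have b4c : (if Pc = p then ec else 0) * 4 ≤ N :=
      le_trans (Nat.mul_le_mul_left _ h4p) (hbound _ _ hPc p hp)
    have b4d : (if Pd = p then ed else 0) * 4 ≤ N :=
      le_trans (Nat.mul_le_mul_left _ h4p) (hbound _ _ hPd p hp)
    have hk := key p hp
    rcases hexcl p hp with h0 | h0
    · refine ⟨h0, ?_⟩
      rw [h0, mul_zero] at hk
      by_contra h
      have hXN : N ≤ N * v.factorization p := Nat.le_mul_of_pos_right N (by omega)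
      omega
    · refine ⟨?_, h0⟩
      rw [h0, mul_zero] at hk
      by_contra h
      have hXN : N ≤ N * u.factorization p := Nat.le_mul_of_pos_right N (by omega)
      omega
  have hk2 := key 2 Nat.prime_two
  have hk3 := key 3 Nat.prime_three
  have hx2 := hexcl 2 Nat.prime_two
  have hx3 := hexcl 3 Nat.prime_three
  have ba2 : (if Pa = 2 then ea else 0) * 1 ≤ N := hbound _ _ hPa 2 Nat.prime_two
  have bb2 : (if Pb = 2 then eb else 0) * 1 ≤ N := hbound _ _ hPb 2 Nat.prime_two
  have bc2 : (if Pc = 2 then ec else 0) * 1 ≤ N := hbound _ _ hPc 2 Nat.prime_two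
  have bd2 : (if Pd = 2 then ed else 0) * 1 ≤ N := hbound _ _ hPd 2 Nat.prime_two
  have ba3 : (if Pa = 3 then ea else 0) * 2 ≤ N := hbound _ _ hPa 3 Nat.prime_three
  have bb3 : (if Pb = 3 then eb else 0) * 2 ≤ N := hbound _ _ hPb 3 Nat.prime_three
  have bc3 : (if Pc = 3 then ec else 0) * 2 ≤ N := hbound _ _ hPc 3 Nat.prime_three
  have bd3 : (if Pd = 3 then ed else 0) * 2 ≤ N := hbound _ _ hPd 3 Nat.prime_three
  -- bounds on exponents of 2 and 3
  have hu3le : u.factorization 3 ≤ 1 := by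
    by_contra h
    have hv3 : v.factorization 3 = 0 := by rcases hx3 with h' | h'; omega; exact h'
    rw [hv3, mul_zero] at hk3
    have h2 : N * 2 ≤ N * u.factorization 3 := Nat.mul_le_mul_left N (by omega)
    omega
  have hv3le : v.factorization 3 ≤ 1 := by
    by_contra h
    have hu3 : u.factorization 3 = 0 := by rcases hx3 with h' | h'; exact h'; omega
    rw [hu3, mul_zero] at hk3
    have h2 : N * 2 ≤ N * v.factorization 3 := Nat.mul_le_mul_left N (by omega)
    omega
  have hu2le : u.factorization 2 ≤ 2 := by
    by_contra h
    have hv2 : v.factorization 2 = 0 := by rcases hx2 with h' | h'; omega; exact h'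
    rw [hv2, mul_zero] at hk2
    have h2 : N * 3 ≤ N * u.factorization 2 := Nat.mul_le_mul_left N (by omega)
    omega
  have hv2le : v.factorization 2 ≤ 2 := by
    by_contra h
    have hu2 : u.factorization 2 = 0 := by rcases hx2 with h' | h'; exact h'; omega
    rw [hu2, mul_zero] at hk2
    have h2 : N * 3 ≤ N * v.factorization 2 := Nat.mul_le_mul_left N (by omega)
    omega
  -- couplings
  have hcoup3u : u.factorization 3 = 1 → u.factorization 2 = 0 := by
    intro h1
    have hv3 : v.factorization 3 = 0 := by rcases hx3 with h' | h'; omega; exact h'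
    rw [h1, mul_one, hv3, mul_zero] at hk3
    have hPa3 : Pa = 3 := by
      by_contra h
      rw [if_neg h] at hk3
      omega
    have hPb3 : Pb = 3 := by
      by_contra h
      rw [if_neg h] at hk3
      omega
    have hPa2 : ¬ Pa = 2 := by rw [hPa3]; norm_num
    have hPb2 : ¬ Pb = 2 := by rw [hPb3]; norm_num
    rw [if_neg hPa2, if_neg hPb2] at hk2
    have hle : u.factorization 2 ≤ v.factorization 2 :=
      Nat.le_of_mul_le_mul_left (by omega) hN
    rcases hx2 with h' | h'
    · exact h'
    · omega
  have hcoup3v : v.factorization 3 = 1 → v.factorization 2 = 0 := by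
    intro h1
    have hu3 : u.factorization 3 = 0 := by rcases hx3 with h' | h'; exact h'; omega
    rw [h1, mul_one, hu3, mul_zero] at hk3
    have hPc3 : Pc = 3 := by
      by_contra h
      rw [if_neg h] at hk3
      omega
    have hPd3 : Pd = 3 := by
      by_contra h
      rw [if_neg h] at hk3
      omega
    have hPc2 : ¬ Pc = 2 := by rw [hPc3]; norm_num
    have hPd2 : ¬ Pd = 2 := by rw [hPd3]; norm_num
    rw [if_neg hPc2, if_neg hPd2] at hk2
    have hle : v.factorization 2 ≤ u.factorization 2 :=
      Nat.le_of_mul_le_mul_left (by omega) hN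
    rcases hx2 with h' | h'
    · omega
    · exact h'
  -- reconstruct u and v
  have hrec : ∀ w : ℕ, w ≠ 0 → (∀ p : ℕ, p.Prime → p ≠ 2 → p ≠ 3 → w.factorization p = 0) →
      w = 2 ^ w.factorization 2 * 3 ^ w.factorization 3 := by
    intro w hw0 hother'
    have hsupp : w.factorization.support ⊆ ({2, 3} : Finset ℕ) := by
      intro p hp
      have hpp : p.Prime := Nat.prime_of_mem_primeFactors
        (by rwa [Nat.support_factorization] at hp)
      by_contra hmem
      simp only [Finset.mem_insert, Finset.mem_singleton] at hmem
      push_neg at hmem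
      rw [Finsupp.mem_support_iff] at hp
      exact hp (hother' p hpp hmem.1 hmem.2)
    conv_lhs => rw [← Nat.factorization_prod_pow_eq_self hw0]
    rw [Finsupp.prod_of_support_subset _ hsupp (fun p k => p ^ k) (by intros; simp)]
    rw [Finset.prod_insert (by norm_num), Finset.prod_singleton]
  have hurec := hrec u hu0 (fun p hp h2 h3 => (hother p hp h2 h3).1)
  have hvrec := hrec v hv0 (fun p hp h2 h3 => (hother p hp h2 h3).2)
  have hq_or : q = (u : ℚ) / v ∨ q = -((u : ℚ) / v) := by
    rcases abs_cases q with ⟨h1, _⟩ | ⟨h1, _⟩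
    · left; rw [← h1, habs]
    · right
      have h2 : -q = (u : ℚ) / v := by rw [← h1, habs]
      rw [← neg_neg q, h2]
  -- case bash
  set a2 := u.factorization 2 with ha2def
  set a3 := u.factorization 3 with ha3def
  set b2 := v.factorization 2 with hb2def
  set b3 := v.factorization 3 with hb3def
  clear_value a2 a3 b2 b3
  clear_value u v
  clear hk2 hk3 ba2 bb2 bc2 bd2 ba3 bb3 bc3 bd3 heq hNat habs hqN hcop hudef hvdef
  have ha2' : a2 = 0 ∨ a2 = 1 ∨ a2 = 2 := by omega
  have ha3' : a3 = 0 ∨ a3 = 1 := by omega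
  have hb2' : b2 = 0 ∨ b2 = 1 ∨ b2 = 2 := by omega
  have hb3' : b3 = 0 ∨ b3 = 1 := by omega
  rcases ha2' with rfl | rfl | rfl <;> rcases ha3' with rfl | rfl <;>
    rcases hb2' with rfl | rfl | rfl <;> rcases hb3' with rfl | rfl <;>
    first
      | omega
      | (norm_num at hurec hvrec
         rcases hq_or with h | h <;> rw [h, hurec, hvrec] <;>
           · simp only [Tset, Set.mem_insert_iff, Set.mem_singleton_iff]
             norm_num)

set_option maxHeartbeats 1000000 in
lemma crossratio_aux (ζ₁ ζ₂ ζ₃ ζ₄ : ℂ)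
    (h1 : ∃ n : ℕ, 0 < n ∧ ζ₁ ^ n = 1)
    (h2 : ∃ n : ℕ, 0 < n ∧ ζ₂ ^ n = 1)
    (h3 : ∃ n : ℕ, 0 < n ∧ ζ₃ ^ n = 1)
    (h4 : ∃ n : ℕ, 0 < n ∧ ζ₄ ^ n = 1)
    (h13 : ζ₁ ≠ ζ₃) (h14 : ζ₁ ≠ ζ₄) (h23 : ζ₂ ≠ ζ₃) (h24 : ζ₂ ≠ ζ₄)
    (q : ℚ) (hq : doubleRatio ζ₁ ζ₂ ζ₃ ζ₄ = (q : ℂ)) :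
    q ≠ 0 ∧ q ∈ Tset := by
  obtain ⟨n₁, hn₁, hz1⟩ := h1
  obtain ⟨n₂, hn₂, hz2⟩ := h2
  obtain ⟨n₃, hn₃, hz3⟩ := h3
  obtain ⟨n₄, hn₄, hz4⟩ := h4
  set n := 3 * (n₁ * n₂ * n₃ * n₄) with hndef
  have hprodpos : 0 < n₁ * n₂ * n₃ * n₄ := Nat.mul_pos (Nat.mul_pos (Nat.mul_pos hn₁ hn₂) hn₃) hn₄
  have hn3 : 3 ≤ n := by omega
  haveI : NeZero n := ⟨by omega⟩
  have hz1n : ζ₁ ^ n = 1 := by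
    have h : n = n₁ * (3 * (n₂ * n₃ * n₄)) := by ring
    rw [h, pow_mul, hz1, one_pow]
  have hz2n : ζ₂ ^ n = 1 := by
    have h : n = n₂ * (3 * (n₁ * n₃ * n₄)) := by ring
    rw [h, pow_mul, hz2, one_pow]
  have hz3n : ζ₃ ^ n = 1 := by
    have h : n = n₃ * (3 * (n₁ * n₂ * n₄)) := by ring
    rw [h, pow_mul, hz3, one_pow]
  have hz4n : ζ₄ ^ n = 1 := by
    have h : n = n₄ * (3 * (n₁ * n₂ * n₃)) := by ring
    rw [h, pow_mul, hz4, one_pow]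
  have hζ10 : ζ₁ ≠ 0 := by
    intro h
    rw [h, zero_pow (by omega : n ≠ 0)] at hz1n
    exact one_ne_zero hz1n.symm
  have hζ20 : ζ₂ ≠ 0 := by
    intro h
    rw [h, zero_pow (by omega : n ≠ 0)] at hz2n
    exact one_ne_zero hz2n.symm
  have hs13 : ζ₁ - ζ₃ ≠ 0 := sub_ne_zero.mpr h13
  have hs14 : ζ₁ - ζ₄ ≠ 0 := sub_ne_zero.mpr h14
  have hs23 : ζ₂ - ζ₃ ≠ 0 := sub_ne_zero.mpr h23
  have hs24 : ζ₂ - ζ₄ ≠ 0 := sub_ne_zero.mpr h24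
  have hq' : (ζ₁ - ζ₃) * (ζ₂ - ζ₄) = (q : ℂ) * ((ζ₁ - ζ₄) * (ζ₂ - ζ₃)) := by
    unfold doubleRatio at hq
    rw [div_mul_div_comm, div_eq_iff (mul_ne_zero hs14 hs23)] at hq
    linear_combination hq
  have hq0 : q ≠ 0 := by
    rintro rfl
    rw [Rat.cast_zero, zero_mul] at hq'
    rcases mul_eq_zero.mp hq' with h | h
    · exact hs13 h
    · exact hs24 h
  refine ⟨hq0, ?_⟩
  obtain ⟨ζ, hζ⟩ : ∃ z : ℂ, IsPrimitiveRoot z n :=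
    ⟨_, Complex.isPrimitiveRoot_exp n (by omega)⟩
  obtain ⟨a₁, ha₁lt, ha₁⟩ := hζ.eq_pow_of_pow_eq_one hz1n
  obtain ⟨a₂, ha₂lt, ha₂⟩ := hζ.eq_pow_of_pow_eq_one hz2n
  obtain ⟨a₃, ha₃lt, ha₃⟩ := hζ.eq_pow_of_pow_eq_one hz3n
  obtain ⟨a₄, ha₄lt, ha₄⟩ := hζ.eq_pow_of_pow_eq_one hz4n
  set Pl : Polynomial ℚ := Polynomial.C q * ((X ^ a₁ - X ^ a₄) * (X ^ a₂ - X ^ a₃))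
      - (X ^ a₁ - X ^ a₃) * (X ^ a₂ - X ^ a₄) with hPldef
  have hPlz : Polynomial.aeval ζ Pl = 0 := by
    simp only [hPldef, map_sub, map_mul, map_pow, aeval_X, aeval_C]
    rw [ha₁, ha₂, ha₃, ha₄, eq_ratCast (algebraMap ℚ ℂ) q]
    linear_combination -hq'
  have hdvd : Polynomial.cyclotomic n ℚ ∣ Pl := by
    rw [Polynomial.cyclotomic_eq_minpoly_rat hζ (by omega)]
    exact minpoly.dvd ℚ ζ hPlz
  have hconj : ∀ k : (ZMod n)ˣ,
      (q : ℂ) * ((ζ₁ ^ (k : ZMod n).val - ζ₄ ^ (k : ZMod n).val)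
        * (ζ₂ ^ (k : ZMod n).val - ζ₃ ^ (k : ZMod n).val))
      = (ζ₁ ^ (k : ZMod n).val - ζ₃ ^ (k : ZMod n).val)
        * (ζ₂ ^ (k : ZMod n).val - ζ₄ ^ (k : ZMod n).val) := by
    intro k
    set kv := (k : ZMod n).val with hkvdef
    have hkprim : IsPrimitiveRoot (ζ ^ kv) n :=
      hζ.pow_of_coprime kv (ZMod.val_coe_unit_coprime k)
    have hcyc0 : Polynomial.aeval (ζ ^ kv) (Polynomial.cyclotomic n ℚ) = 0 := by
      rw [Polynomial.aeval_def, ← Polynomial.eval_map, Polynomial.map_cyclotomic]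
      exact hkprim.isRoot_cyclotomic (by omega)
    obtain ⟨R, hR⟩ := hdvd
    have hPlk : Polynomial.aeval (ζ ^ kv) Pl = 0 := by rw [hR, map_mul, hcyc0, zero_mul]
    simp only [hPldef, map_sub, map_mul, map_pow, aeval_X, aeval_C] at hPlk
    have e1 : (ζ ^ kv) ^ a₁ = ζ₁ ^ kv := by rw [← pow_mul, mul_comm, pow_mul, ha₁]
    have e2 : (ζ ^ kv) ^ a₂ = ζ₂ ^ kv := by rw [← pow_mul, mul_comm, pow_mul, ha₂]
    have e3 : (ζ ^ kv) ^ a₃ = ζ₃ ^ kv := by rw [← pow_mul, mul_comm, pow_mul, ha₃]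
    have e4 : (ζ ^ kv) ^ a₄ = ζ₄ ^ kv := by rw [← pow_mul, mul_comm, pow_mul, ha₄]
    rw [e1, e2, e3, e4, eq_ratCast (algebraMap ℚ ℂ) q] at hPlk
    linear_combination hPlk
  -- ratios
  set A := ζ₁⁻¹ * ζ₃ with hAdef
  set B := ζ₂⁻¹ * ζ₄ with hBdef
  set G := ζ₁⁻¹ * ζ₄ with hGdef
  set D := ζ₂⁻¹ * ζ₃ with hDdef
  have hkey : ∀ k : (ZMod n)ˣ,
      ((q : ℂ) * ((1 - G ^ (k : ZMod n).val) * (1 - D ^ (k : ZMod n).val)))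
        * (ζ₁ ^ (k : ZMod n).val * ζ₂ ^ (k : ZMod n).val)
      = ((1 - A ^ (k : ZMod n).val) * (1 - B ^ (k : ZMod n).val))
        * (ζ₁ ^ (k : ZMod n).val * ζ₂ ^ (k : ZMod n).val) := by
    intro k
    set kv := (k : ZMod n).val with hkvdef
    have hz1k : (ζ₁ : ℂ) ^ kv ≠ 0 := pow_ne_zero _ hζ10
    have hz2k : (ζ₂ : ℂ) ^ kv ≠ 0 := pow_ne_zero _ hζ20
    have eG : (1 - G ^ kv) * ζ₁ ^ kv = ζ₁ ^ kv - ζ₄ ^ kv := by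
      simp only [hGdef, mul_pow, inv_pow]
      field_simp
    have eD : (1 - D ^ kv) * ζ₂ ^ kv = ζ₂ ^ kv - ζ₃ ^ kv := by
      simp only [hDdef, mul_pow, inv_pow]
      field_simp
    have eA : (1 - A ^ kv) * ζ₁ ^ kv = ζ₁ ^ kv - ζ₃ ^ kv := by
      simp only [hAdef, mul_pow, inv_pow]
      field_simp
    have eB : (1 - B ^ kv) * ζ₂ ^ kv = ζ₂ ^ kv - ζ₄ ^ kv := by
      simp only [hBdef, mul_pow, inv_pow]
      field_simp
    calc ((q : ℂ) * ((1 - G ^ kv) * (1 - D ^ kv))) * (ζ₁ ^ kv * ζ₂ ^ kv)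
        = (q : ℂ) * (((1 - G ^ kv) * ζ₁ ^ kv) * ((1 - D ^ kv) * ζ₂ ^ kv)) := by ring
      _ = (q : ℂ) * ((ζ₁ ^ kv - ζ₄ ^ kv) * (ζ₂ ^ kv - ζ₃ ^ kv)) := by rw [eG, eD]
      _ = (ζ₁ ^ kv - ζ₃ ^ kv) * (ζ₂ ^ kv - ζ₄ ^ kv) := hconj k
      _ = ((1 - A ^ kv) * ζ₁ ^ kv) * ((1 - B ^ kv) * ζ₂ ^ kv) := by rw [eA, eB]
      _ = ((1 - A ^ kv) * (1 - B ^ kv)) * (ζ₁ ^ kv * ζ₂ ^ kv) := by ring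
  have hPP : (∏ k : (ZMod n)ˣ, (((q : ℂ) * ((1 - G ^ (k : ZMod n).val)
        * (1 - D ^ (k : ZMod n).val)))
        * (ζ₁ ^ (k : ZMod n).val * ζ₂ ^ (k : ZMod n).val)))
      = ∏ k : (ZMod n)ˣ, (((1 - A ^ (k : ZMod n).val) * (1 - B ^ (k : ZMod n).val))
        * (ζ₁ ^ (k : ZMod n).val * ζ₂ ^ (k : ZMod n).val)) :=
    Finset.prod_congr rfl (fun k _ => hkey k)
  simp only [Finset.prod_mul_distrib, Finset.prod_const, Finset.card_univ] at hPP
  rw [ZMod.card_units_eq_totient n] at hPP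
  have hW : (∏ k : (ZMod n)ˣ, ζ₁ ^ (k : ZMod n).val)
      * (∏ k : (ZMod n)ˣ, ζ₂ ^ (k : ZMod n).val) ≠ 0 :=
    mul_ne_zero (Finset.prod_ne_zero_iff.mpr (fun k _ => pow_ne_zero _ hζ10))
      (Finset.prod_ne_zero_iff.mpr (fun k _ => pow_ne_zero _ hζ20))
  have hMain := mul_right_cancel₀ hW hPP
  -- apply prodA
  have hApow : A ^ n = 1 := by rw [hAdef, mul_pow, inv_pow, hz1n, hz3n, inv_one, one_mul]
  have hBpow : B ^ n = 1 := by rw [hBdef, mul_pow, inv_pow, hz2n, hz4n, inv_one, one_mul]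
  have hGpow : G ^ n = 1 := by rw [hGdef, mul_pow, inv_pow, hz1n, hz4n, inv_one, one_mul]
  have hDpow : D ^ n = 1 := by rw [hDdef, mul_pow, inv_pow, hz2n, hz3n, inv_one, one_mul]
  have hA1 : A ≠ 1 := fun h => h13 ((inv_mul_eq_one₀ hζ10).mp h)
  have hB1 : B ≠ 1 := fun h => h24 ((inv_mul_eq_one₀ hζ20).mp h)
  have hG1 : G ≠ 1 := fun h => h14 ((inv_mul_eq_one₀ hζ10).mp h)
  have hD1 : D ≠ 1 := fun h => h23 ((inv_mul_eq_one₀ hζ20).mp h)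
  obtain ⟨PA, EA, hPA, hFA⟩ := prodA (by omega) hApow hA1
  obtain ⟨PB, EB, hPB, hFB⟩ := prodA (by omega) hBpow hB1
  obtain ⟨PG, EG, hPG, hFG⟩ := prodA (by omega) hGpow hG1
  obtain ⟨PD, ED, hPD, hFD⟩ := prodA (by omega) hDpow hD1
  rw [hFA, hFB, hFG, hFD] at hMain
  have hQ : q ^ n.totient * ((PG ^ EG * PD ^ ED : ℕ) : ℚ)
      = ((PA ^ EA * PB ^ EB : ℕ) : ℚ) := by
    have hMain' : ((q ^ n.totient * ((PG ^ EG * PD ^ ED : ℕ) : ℚ) : ℚ) : ℂ)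
        = (((PA ^ EA * PB ^ EB : ℕ) : ℚ) : ℂ) := by
      push_cast at hMain ⊢
      linear_combination hMain
    exact_mod_cast hMain'
  exact lemC n.totient (Nat.totient_even (by omega)) (Nat.totient_pos.mpr (by omega))
    q hq0 PA EA PB EB PG EG PD ED hPA hPB hPG hPD hQ

/-- A rational double ratio of four pairwise distinct complex
roots of unity lies in the explicit 15-element list. -/
theorem rational_doubleRatio_rootsOfUnity_mem
    (ζ₁ ζ₂ ζ₃ ζ₄ : ℂ)
    (h1 : ∃ n : ℕ, 0 < n ∧ ζ₁ ^ n = 1)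
    (h2 : ∃ n : ℕ, 0 < n ∧ ζ₂ ^ n = 1)
    (h3 : ∃ n : ℕ, 0 < n ∧ ζ₃ ^ n = 1)
    (h4 : ∃ n : ℕ, 0 < n ∧ ζ₄ ^ n = 1)
    (hdist : ζ₁ ≠ ζ₂ ∧ ζ₁ ≠ ζ₃ ∧ ζ₁ ≠ ζ₄ ∧ ζ₂ ≠ ζ₃ ∧ ζ₂ ≠ ζ₄ ∧ ζ₃ ≠ ζ₄)
    (q : ℚ) (hq : doubleRatio ζ₁ ζ₂ ζ₃ ζ₄ = (q : ℂ)) :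
    q ∈ ({2, -1, 1/2, 3, 1/3, -2, -1/2, 2/3, 3/2,
          4, 1/4, -3, -1/3, 4/3, 3/4} : Set ℚ) := by
  obtain ⟨hd12, hd13, hd14, hd23, hd24, hd34⟩ := hdist
  obtain ⟨hq0, hqT⟩ := crossratio_aux ζ₁ ζ₂ ζ₃ ζ₄ h1 h2 h3 h4 hd13 hd14 hd23 hd24 q hq
  have hz14 : ζ₁ - ζ₄ ≠ 0 := sub_ne_zero.mpr hd14
  have hz23 : ζ₂ - ζ₃ ≠ 0 := sub_ne_zero.mpr hd23
  have hz32 : ζ₃ - ζ₂ ≠ 0 := sub_ne_zero.mpr hd23.symm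
  have hq' : (ζ₁ - ζ₃) * (ζ₂ - ζ₄) = (q : ℂ) * ((ζ₁ - ζ₄) * (ζ₂ - ζ₃)) := by
    unfold doubleRatio at hq
    rw [div_mul_div_comm, div_eq_iff (mul_ne_zero hz14 hz23)] at hq
    linear_combination hq
  have hq2 : doubleRatio ζ₁ ζ₃ ζ₂ ζ₄ = ((1 - q : ℚ) : ℂ) := by
    unfold doubleRatio
    rw [div_mul_div_comm, div_eq_iff (mul_ne_zero hz14 hz32)]
    push_cast
    linear_combination hq'
  obtain ⟨hq0', hqT'⟩ := crossratio_aux ζ₁ ζ₃ ζ₂ ζ₄ h1 h3 h2 h4 hd12 hd14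
    (fun h => hd23 h.symm) hd34 (1 - q) hq2
  clear hq hq2 hq' h1 h2 h3 h4 hd12 hd13 hd14 hd23 hd24 hd34 hz14 hz23 hz32 hq0'
  simp only [Tset, Set.mem_insert_iff, Set.mem_singleton_iff] at hqT hqT' ⊢
  rcases hqT with rfl | rfl | rfl | rfl | rfl | rfl | rfl | rfl | rfl | rfl | rfl |
    rfl | rfl | rfl | rfl | rfl | rfl | rfl | rfl | rfl | rfl | rfl <;>
    (revert hqT'; norm_num)
end
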